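/- arXiv:0711.0596 — 8 statements merged into one kernel-verified Lean document; each statement's English description precedes it below -/
import Mathlib

section
/- Let n and k be natural numbers with 0 < k < n, and let a_{k+1}, …, a_n be integers ≥ 1. Let S be the presented commutative monoid ⟨u₁,…,uₙ | u₁⋯u_k = u_{k+1}^{a_{k+1}}⋯u_n^{a_n}⟩, i.e. the quotient of (Fin n →₀ ℕ) by the additive congruence generated by the single pair (w₁, w₂), where w₁ = e₁ + ⋯ + e_k and w₂ = a_{k+1}·e_{k+1} + ⋯ + a_n·e_n. In the free abelian monoid (Fin k × Fin (n−k) →₀ ℕ) with standard generators x_{i,l} (1 ≤ i ≤ k, 1 ≤ l ≤ n−k), define v_j = a_{k+1}·x_{j,1} + a_{k+2}·x_{j,2} + ⋯ + a_n·x_{j,n−k} for 1 ≤ j ≤ k, and v_{k+l} = x_{1,l} + x_{2,l} + ⋯ + x_{k,l} for 1 ≤ l ≤ n−k. Let f : (Fin n →₀ ℕ) →+ (Fin k × Fin (n−k) →₀ ℕ) be the additive monoid homomorphism with f(e_j) = v_j for all j. Then f(w₁) = f(w₂), so f factors through the quotient map π, and the induced additive monoid homomorphism S →+ (Fin k ×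 Fin (n−k) →₀ ℕ) is injective; in particular S is cancellative and is isomorphic to the submonoid of (Fin k × Fin (n−k) →₀ ℕ) generated by v₁, …, vₙ. -/
/-- The word `w₁ = e₁ + ⋯ + e_k` in the free abelian monoid `Fin n →₀ ℕ`. -/
noncomputable def wordOne (n k : ℕ) : Fin n →₀ ℕ :=
  Finsupp.equivFunOnFinite.symm fun i => if i.val < k then 1 else 0

/-- The word `w₂ = a_{k+1}·e_{k+1} + ⋯ + a_n·e_n` in the free abelian monoid `Fin n →₀ ℕ`. -/
noncomputable def wordTwo (n k : ℕ) (a : Fin n → ℕ) : Fin n →₀ ℕ :=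
  Finsupp.equivFunOnFinite.symm fun i => if k ≤ i.val then a i else 0

/-- The elements `v₁, …, vₙ` of the free abelian monoid of rank `k(n-k)`:
for `j < k`, `v_j = ∑_l a_{k+l} · x_{j,l}`, and for `j ≥ k`,
`v_j = ∑_i x_{i, j-k}`. -/
noncomputable def vWord (n k : ℕ) (a : Fin n → ℕ) (j : Fin n) :
    Fin k × Fin (n - k) →₀ ℕ :=
  Finsupp.equivFunOnFinite.symm fun p =>
    if j.val < k then (if p.1.val = j.val then a ⟨k + p.2.val, by have := p.2.isLt; omega⟩ else 0)
    else (if p.2.val = j.val - k then 1 else 0)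

lemma vWord_apply (n k : ℕ) (a : Fin n → ℕ) (j : Fin n) (p : Fin k × Fin (n - k)) :
    vWord n k a j p =
      if j.val < k then (if p.1.val = j.val then a ⟨k + p.2.val, by have := p.2.isLt; omega⟩ else 0)
      else (if p.2.val = j.val - k then 1 else 0) := by
  simp [vWord]

lemma wordOne_apply (n k : ℕ) (i : Fin n) : wordOne n k i = if i.val < k then 1 else 0 := by
  simp [wordOne]

lemma wordTwo_apply (n k : ℕ) (a : Fin n → ℕ) (i : Fin n) :
    wordTwo n k a i = if k ≤ i.val then a i else 0 := by
  simp [wordTwo]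

lemma f_apply (n k : ℕ) (hkn : k < n) (a : Fin n → ℕ) (x : Fin n →₀ ℕ)
    (p : Fin k × Fin (n - k)) :
    (Finsupp.liftAddHom (fun j => multiplesHom _ (vWord n k a j)) x) p
      = x ⟨p.1.val, lt_trans p.1.isLt hkn⟩ * a ⟨k + p.2.val, by have := p.2.isLt; omega⟩
        + x ⟨k + p.2.val, by have := p.2.isLt; omega⟩ := by
  classical
  rw [Finsupp.liftAddHom_apply, Finsupp.sum_fintype _ _ (by intro i; simp)]
  rw [Finsupp.finset_sum_apply]
  have hp2 : k + p.2.val < n := by have := p.2.isLt; omega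
  have key : ∀ j : Fin n, (x j • vWord n k a j) p
      = (if j = (⟨p.1.val, lt_trans p.1.isLt hkn⟩ : Fin n) then x j * a ⟨k + p.2.val, hp2⟩ else 0)
        + (if j = (⟨k + p.2.val, hp2⟩ : Fin n) then x j else 0) := by
    intro j
    rw [Finsupp.smul_apply, vWord_apply, smul_eq_mul]
    simp only [Fin.ext_iff]
    split_ifs <;> omega
  simp only [multiplesHom_apply]
  rw [Finset.sum_congr rfl fun j _ => key j, Finset.sum_add_distrib,
    Finset.sum_ite_eq' Finset.univ, Finset.sum_ite_eq' Finset.univ]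
  simp

lemma f_rel (n k : ℕ) (hkn : k < n) (a : Fin n → ℕ) :
    (Finsupp.liftAddHom fun j => multiplesHom _ (vWord n k a j)) (wordOne n k)
      = (Finsupp.liftAddHom fun j => multiplesHom _ (vWord n k a j)) (wordTwo n k a) := by
  ext p
  rw [f_apply n k hkn, f_apply n k hkn]
  rw [wordOne_apply, wordOne_apply, wordTwo_apply, wordTwo_apply]
  have h1 : p.1.val < k := p.1.isLt
  have h2 : ¬ (k + p.2.val < k) := by omega
  have h3 : ¬ (k ≤ p.1.val) := by omega
  have h4 : k ≤ k + p.2.val := by omega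
  rw [if_pos h1, if_neg h2, if_neg h3, if_pos h4]
  ring

lemma nat_helper (X Y A B d : ℕ) (hA : 1 ≤ A)
    (h : X * A + B = Y * A + (B + d * A)) : X = Y + d := by
  have h2 : X * A = (Y + d) * A := by rw [add_mul]; linarith
  exact Nat.eq_of_mul_eq_mul_right hA h2

lemma decomp (n k : ℕ) (hk : 0 < k) (hkn : k < n) (a : Fin n → ℕ)
    (ha : ∀ i : Fin n, k ≤ i.val → 1 ≤ a i) (x y : Fin n →₀ ℕ)
    (hxy : (Finsupp.liftAddHom fun j => multiplesHom _ (vWord n k a j)) x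
        = (Finsupp.liftAddHom fun j => multiplesHom _ (vWord n k a j)) y)
    (hle : y ⟨0, lt_trans hk hkn⟩ ≤ x ⟨0, lt_trans hk hkn⟩) :
    ∃ (z : Fin n →₀ ℕ) (d : ℕ), x = z + d • wordOne n k ∧ y = z + d • wordTwo n k a := by
  classical
  have hnk : 0 < n - k := by omega
  have heq : ∀ (i : Fin k) (l : Fin (n - k)),
      x ⟨i.val, lt_trans i.isLt hkn⟩ * a ⟨k + l.val, by have := l.isLt; omega⟩
        + x ⟨k + l.val, by have := l.isLt; omega⟩
      = y ⟨i.val, lt_trans i.isLt hkn⟩ * a ⟨k + l.val, by have := l.isLt; omega⟩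
        + y ⟨k + l.val, by have := l.isLt; omega⟩ := by
    intro i l
    have := DFunLike.congr_fun hxy (i, l)
    rw [f_apply n k hkn, f_apply n k hkn] at this
    exact this
  obtain ⟨d, hx0⟩ : ∃ d : ℕ, x ⟨0, lt_trans hk hkn⟩ = y ⟨0, lt_trans hk hkn⟩ + d :=
    ⟨x ⟨0, lt_trans hk hkn⟩ - y ⟨0, lt_trans hk hkn⟩, by omega⟩
  clear hle
  have hx0' : x ⟨0, lt_trans hk hkn⟩ = y ⟨0, lt_trans hk hkn⟩ + d := hx0
  -- step 1
  have step1 : ∀ l : Fin (n - k), y ⟨k + l.val, by have := l.isLt; omega⟩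
      = x ⟨k + l.val, by have := l.isLt; omega⟩ + d * a ⟨k + l.val, by have := l.isLt; omega⟩ := by
    intro l
    have h := heq ⟨0, hk⟩ l
    rw [hx0, add_mul] at h
    linarith
  -- step 2
  have step2 : ∀ i : Fin k, x ⟨i.val, lt_trans i.isLt hkn⟩ = y ⟨i.val, lt_trans i.isLt hkn⟩ + d := by
    intro i
    have h := heq i ⟨0, hnk⟩
    rw [step1 ⟨0, hnk⟩] at h
    exact nat_helper _ _ _ _ _ (ha _ (by simp)) h
  refine ⟨Finsupp.equivFunOnFinite.symm fun j => if j.val < k then y j else x j, d, ?_, ?_⟩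
  · ext j
    rw [Finsupp.add_apply, Finsupp.smul_apply, wordOne_apply, smul_eq_mul]
    simp only [Finsupp.coe_equivFunOnFinite_symm]
    by_cases hj : j.val < k
    · rw [if_pos hj, if_pos hj]
      have := step2 ⟨j.val, hj⟩
      simp only at this
      simp only [Fin.eta] at this ⊢
      omega
    · rw [if_neg hj, if_neg hj]; ring
  · ext j
    rw [Finsupp.add_apply, Finsupp.smul_apply, wordTwo_apply, smul_eq_mul]
    simp only [Finsupp.coe_equivFunOnFinite_symm]
    by_cases hj : j.val < k
    · rw [if_pos hj, if_neg (by omega)]; ring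
    · rw [if_neg hj, if_pos (by omega)]
      have := step1 ⟨j.val - k, by omega⟩
      have hj' : (⟨k + (j.val - k), by omega⟩ : Fin n) = j := by
        apply Fin.ext; simp; omega
      rw [hj'] at this
      omega

lemma f_of_rel (n k : ℕ) (hk : 0 < k) (hkn : k < n) (a : Fin n → ℕ)
    (ha : ∀ i : Fin n, k ≤ i.val → 1 ≤ a i) (x y : Fin n →₀ ℕ)
    (hxy : (Finsupp.liftAddHom fun j => multiplesHom _ (vWord n k a j)) x
        = (Finsupp.liftAddHom fun j => multiplesHom _ (vWord n k a j)) y) :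
    addConGen (fun u v => u = wordOne n k ∧ v = wordTwo n k a) x y := by
  set c := addConGen (fun u v => u = wordOne n k ∧ v = wordTwo n k a) with hc
  have hbase : c (wordOne n k) (wordTwo n k a) := AddConGen.Rel.of _ _ ⟨rfl, rfl⟩
  have hsmul : ∀ d : ℕ, c (d • wordOne n k) (d • wordTwo n k a) := by
    intro d
    induction d with
    | zero => simp; exact c.refl 0
    | succ m ih =>
      rw [succ_nsmul, succ_nsmul]
      exact c.add ih hbase
  have main : ∀ u v : Fin n →₀ ℕ,
      (Finsupp.liftAddHom fun j => multiplesHom _ (vWord n k a j)) u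
        = (Finsupp.liftAddHom fun j => multiplesHom _ (vWord n k a j)) v →
      v ⟨0, lt_trans hk hkn⟩ ≤ u ⟨0, lt_trans hk hkn⟩ → c u v := by
    intro u v huv hle
    obtain ⟨z, d, h1, h2⟩ := decomp n k hk hkn a ha u v huv hle
    rw [h1, h2]
    exact c.add (c.refl z) (hsmul d)
  rcases le_total (y ⟨0, lt_trans hk hkn⟩) (x ⟨0, lt_trans hk hkn⟩) with h | h
  · exact main x y hxy h
  · exact c.symm (main y x hxy.symm h)

theorem stmt0 (n k : ℕ) (hk : 0 < k) (hkn : k < n) (a : Fin n → ℕ)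
    (ha : ∀ i : Fin n, k ≤ i.val → 1 ≤ a i)
    (c : AddCon (Fin n →₀ ℕ))
    (hc : c = addConGen (fun x y => x = wordOne n k ∧ y = wordTwo n k a))
    (f : (Fin n →₀ ℕ) →+ (Fin k × Fin (n - k) →₀ ℕ))
    (hf : f = Finsupp.liftAddHom fun j => multiplesHom _ (vWord n k a j)) :
    f (wordOne n k) = f (wordTwo n k a) ∧
    (∀ g : c.Quotient →+ (Fin k × Fin (n - k) →₀ ℕ),
      (∀ x : Fin n →₀ ℕ, g (c.mk' x) = f x) →
      Function.Injective g ∧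
      AddMonoidHom.mrange g = AddSubmonoid.closure (Set.range (vWord n k a))) ∧
    (∀ s t r : c.Quotient, s + t = s + r → t = r) ∧
    Nonempty (c.Quotient ≃+ AddSubmonoid.closure (Set.range (vWord n k a))) := by
  subst hf
  set F : (Fin n →₀ ℕ) →+ (Fin k × Fin (n - k) →₀ ℕ) :=
    Finsupp.liftAddHom fun j => multiplesHom _ (vWord n k a j) with hF
  have hrel : F (wordOne n k) = F (wordTwo n k a) := f_rel n k hkn a
  -- c ≤ ker F
  have hle : c ≤ AddCon.ker F := by
    rw [hc]
    apply AddCon.addConGen_le.mpr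
    rintro u v ⟨rfl, rfl⟩
    exact hrel
  -- the universal part
  have huniv : ∀ g : c.Quotient →+ (Fin k × Fin (n - k) →₀ ℕ),
      (∀ x : Fin n →₀ ℕ, g (c.mk' x) = F x) →
      Function.Injective g ∧
      AddMonoidHom.mrange g = AddSubmonoid.closure (Set.range (vWord n k a)) := by
    intro g hg
    have hinj : Function.Injective g := by
      intro s t hst
      obtain ⟨x, rfl⟩ := AddCon.mk'_surjective (c := c) s
      obtain ⟨y, rfl⟩ := AddCon.mk'_surjective (c := c) t
      rw [hg, hg] at hst
      have := f_of_rel n k hk hkn a ha x y hst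
      rw [← hc] at this
      exact (AddCon.eq c).mpr this
    refine ⟨hinj, ?_⟩
    have hr : AddMonoidHom.mrange g = AddMonoidHom.mrange F := by
      ext w
      constructor
      · rintro ⟨s, rfl⟩
        obtain ⟨x, rfl⟩ := AddCon.mk'_surjective (c := c) s
        exact ⟨x, (hg x).symm⟩
      · rintro ⟨x, rfl⟩
        exact ⟨c.mk' x, hg x⟩
    rw [hr]
    apply le_antisymm
    · rintro w ⟨x, rfl⟩
      rw [hF, Finsupp.liftAddHom_apply]
      apply sum_mem
      intro j _
      simp only [multiplesHom_apply]
      exact AddSubmonoid.nsmul_mem _ (AddSubmonoid.subset_closure (Set.mem_range_self j)) _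
    · rw [AddSubmonoid.closure_le]
      rintro w ⟨j, rfl⟩
      refine ⟨Finsupp.single j 1, ?_⟩
      rw [hF, Finsupp.liftAddHom_apply_single]
      simp
  refine ⟨hrel, huniv, ?_, ?_⟩
  · -- cancellation
    set g0 := c.lift F hle with hg0def
    have hg0 : ∀ x : Fin n →₀ ℕ, g0 (c.mk' x) = F x := fun x => AddCon.lift_mk' hle x
    obtain ⟨hinj, -⟩ := huniv g0 hg0
    intro s t r h
    apply hinj
    have : g0 s + g0 t = g0 s + g0 r := by rw [← map_add, ← map_add, h]
    exact add_left_cancel this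
  · -- equiv
    set g0 := c.lift F hle with hg0def
    have hg0 : ∀ x : Fin n →₀ ℕ, g0 (c.mk' x) = F x := fun x => AddCon.lift_mk' hle x
    obtain ⟨hinj, hrange⟩ := huniv g0 hg0
    set T := AddSubmonoid.closure (Set.range (vWord n k a)) with hT
    have hmem : ∀ s : c.Quotient, g0 s ∈ T := by
      intro s
      rw [← hrange]
      exact ⟨s, rfl⟩
    set h : c.Quotient →+ T := g0.codRestrict T hmem with hh
    have hbij : Function.Bijective h := by
      constructor
      · intro s t hst
        apply hinj
        have := congrArg (Subtype.val) hst
        exact this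
      · rintro ⟨w, hw⟩
        rw [← hrange] at hw
        obtain ⟨s, rfl⟩ := hw
        exact ⟨s, rfl⟩
    exact ⟨AddEquiv.ofBijective h hbij⟩
end

section
/- Let n and k be natural numbers with 0 < k < n, and let a_{k+1}, …, a_n be integers ≥ 1. In the free abelian monoid (Fin k × Fin (n−k) →₀ ℕ) with standard generators x_{i,l}, define v_j = a_{k+1}·x_{j,1} + ⋯ + a_n·x_{j,n−k} for 1 ≤ j ≤ k and v_{k+l} = x_{1,l} + ⋯ + x_{k,l} for 1 ≤ l ≤ n−k. Then the submonoid V generated by v₁, …, vₙ is normal in the sense that V = VV^{−1} ∩ ℕ^{k(n−k)}: that is, for every x ∈ (Fin k × Fin (n−k) →₀ ℕ), if the image of x in the free abelian group (Fin k × Fin (n−k) →₀ ℤ) lies in the subgroup generated by the images of v₁, …, vₙ, then x lies in the additive submonoid generated by v₁, …, vₙ. -/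
/-- The canonical embedding of the free abelian monoid into the free abelian group. -/
noncomputable def toIntHom (m : Type*) : (m →₀ ℕ) →+ (m →₀ ℤ) :=
  Finsupp.mapRange.addMonoidHom (Nat.castAddMonoidHom ℤ)

lemma sum_vword_entry {R : Type*} [CommSemiring R] (n k : ℕ) (hkn : k < n)
    (a : Fin n → ℕ) (c : Fin n → R) (i : Fin k) (l : Fin (n - k)) :
    ∑ j : Fin n, c j * (if j.val < k then
        (if i.val = j.val then ((a ⟨k + l.val, by have := l.isLt; omega⟩ : ℕ) : R) else 0)
      else (if l.val = j.val - k then (1 : R) else 0))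
    = c ⟨i.val, i.isLt.trans hkn⟩ * ((a ⟨k + l.val, by have := l.isLt; omega⟩ : ℕ) : R)
      + c ⟨k + l.val, by have := l.isLt; omega⟩ := by
  have hl := l.isLt
  have hi := i.isLt
  rw [Finset.sum_eq_add_of_mem ⟨i.val, i.isLt.trans hkn⟩ ⟨k + l.val, by omega⟩
    (Finset.mem_univ _) (Finset.mem_univ _) (by simp [Fin.ext_iff]; omega)
    (fun j _ h12 => by
      obtain ⟨h1, h2⟩ := h12
      have h1' : j.val ≠ i.val := fun h => h1 (Fin.ext h)
      have h2' : j.val ≠ k + l.val := fun h => h2 (Fin.ext h)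
      by_cases hj : j.val < k
      · rw [if_pos hj, if_neg (fun h => h1' h.symm), mul_zero]
      · rw [if_neg hj, if_neg (by omega), mul_zero])]
  have hc1 : ¬ (k + l.val < k) := by omega
  have hc2 : l.val = k + l.val - k := by omega
  simp only [Fin.val_mk, if_pos hi, if_pos (rfl : i.val = i.val), if_neg hc1, if_pos hc2, mul_one, if_true]

theorem stmt1 (n k : ℕ) (hk : 0 < k) (hkn : k < n) (a : Fin n → ℕ)
    (ha : ∀ i : Fin n, k ≤ i.val → 1 ≤ a i)
    (x : Fin k × Fin (n - k) →₀ ℕ)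
    (hx : toIntHom (Fin k × Fin (n - k)) x ∈
      AddSubgroup.closure (Set.range fun j => toIntHom (Fin k × Fin (n - k)) (vWord n k a j))) :
    x ∈ AddSubmonoid.closure (Set.range (vWord n k a)) := by
  rw [← Submodule.span_int_eq_addSubgroupClosure, Submodule.mem_toAddSubgroup,
    Submodule.mem_span_range_iff_exists_fun] at hx
  obtain ⟨c, hc⟩ := hx
  set A : Fin (n - k) → ℕ := fun l => a ⟨k + l.val, by have := l.isLt; omega⟩ with hA
  set C : Fin k → ℤ := fun i => c ⟨i.val, i.isLt.trans hkn⟩ with hC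
  set D : Fin (n - k) → ℤ := fun l => c ⟨k + l.val, by have := l.isLt; omega⟩ with hD
  have hcoord : ∀ (i : Fin k) (l : Fin (n - k)), ((x (i, l) : ℕ) : ℤ) = C i * A l + D l := by
    intro i l
    have h := DFunLike.congr_fun hc (i, l)
    rw [Finsupp.finset_sum_apply] at h
    simp only [toIntHom, vWord, Finsupp.mapRange.addMonoidHom_apply, Finsupp.mapRange_apply,
      Finsupp.smul_apply, smul_eq_mul, Finsupp.coe_equivFunOnFinite_symm,
      Nat.coe_castAddMonoidHom, Nat.cast_ite, Nat.cast_zero, Nat.cast_one] at h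
    rw [sum_vword_entry n k hkn a c i l] at h
    exact h.symm
  haveI : Nonempty (Fin k) := ⟨⟨0, hk⟩⟩
  obtain ⟨i₀, -, hmin⟩ := Finset.exists_mem_eq_inf' Finset.univ_nonempty C
  set m := Finset.univ.inf' Finset.univ_nonempty C with hm
  have hCm : ∀ i, 0 ≤ C i - m := fun i =>
    sub_nonneg.mpr (Finset.inf'_le C (Finset.mem_univ i))
  have hDm : ∀ l, 0 ≤ D l + m * A l := by
    intro l
    have h := hcoord i₀ l
    have : D l + m * A l = ((x (i₀, l) : ℕ) : ℤ) := by rw [h, hmin]; ring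
    rw [this]
    exact Int.natCast_nonneg _
  set e : Fin n → ℕ := fun j =>
    if h : j.val < k then (C ⟨j.val, h⟩ - m).toNat
    else (D ⟨j.val - k, by have := j.isLt; omega⟩ + m * A ⟨j.val - k, by have := j.isLt; omega⟩).toNat
    with he
  have hxeq : x = ∑ j : Fin n, e j • vWord n k a j := by
    ext p
    obtain ⟨i, l⟩ := p
    rw [Finsupp.finset_sum_apply]
    simp only [Finsupp.smul_apply, smul_eq_mul, vWord,
      Finsupp.coe_equivFunOnFinite_symm]
    have hs := sum_vword_entry (R := ℕ) n k hkn a e i l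
    simp only [Nat.cast_id] at hs
    rw [hs]
    have hrow : e ⟨i.val, i.isLt.trans hkn⟩ = (C i - m).toNat := by
      rw [he]; simp only [Fin.val_mk]
      rw [dif_pos i.isLt]
    have hcol : e ⟨k + l.val, by have := l.isLt; omega⟩ = (D l + m * A l).toNat := by
      rw [he]; simp only [Fin.val_mk]
      rw [dif_neg (by omega : ¬ k + l.val < k)]
      have hfin : (⟨k + l.val - k, by have := l.isLt; omega⟩ : Fin (n - k)) = l :=
        Fin.ext (by show k + l.val - k = l.val; omega)
      rw [hfin]
    rw [hrow, hcol]
    have := hcoord i l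
    apply Nat.cast_injective (R := ℤ)
    push_cast
    rw [Int.toNat_of_nonneg (hCm i), Int.toNat_of_nonneg (hDm l), this]
    ring
  rw [hxeq]
  exact AddSubmonoid.sum_mem _ fun j _ =>
    (AddSubmonoid.closure (Set.range (vWord n k a))).nsmul_mem
      (AddSubmonoid.subset_closure (Set.mem_range_self j)) (e j)
end

section
/- Let n and k be natural numbers with 0 < k < n, and let a_{k+1}, …, a_n be integers ≥ 1. Let S be the presented commutative monoid ⟨u₁,…,uₙ | u₁⋯u_k = u_{k+1}^{a_{k+1}}⋯u_n^{a_n}⟩, the quotient of (Fin n →₀ ℕ) by the additive congruence generated by the pair (w₁, w₂) with w₁ = e₁ + ⋯ + e_k and w₂ = a_{k+1}·e_{k+1} + ⋯ + a_n·e_n, and let π be the quotient map. Then S is the union of the images of the free abelian submonoids F_i = ⟨u_j : j ≠ i⟩ for 1 ≤ i ≤ k: for every s ∈ S there exist i with 1 ≤ i ≤ k and a word x ∈ (Fin n →₀ ℕ) with x(i) = 0 and π(x) = s. -/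
theorem stmt2 (n k : ℕ) (hk : 0 < k) (hkn : k < n) (a : Fin n → ℕ)
    (ha : ∀ i : Fin n, k ≤ i.val → 1 ≤ a i)
    (c : AddCon (Fin n →₀ ℕ))
    (hc : c = addConGen (fun x y => x = wordOne n k ∧ y = wordTwo n k a))
    (s : c.Quotient) :
    ∃ i : Fin n, i.val < k ∧ ∃ x : Fin n →₀ ℕ, x i = 0 ∧ c.mk' x = s := by
  have hrel : c (wordOne n k) (wordTwo n k a) := by
    rw [hc]; exact AddConGen.Rel.of _ _ ⟨rfl, rfl⟩
  obtain ⟨y, rfl⟩ := AddCon.mk'_surjective s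
  suffices h : ∀ N (y : Fin n →₀ ℕ), (∑ i : Fin n, if i.val < k then y i else 0) = N →
      ∃ i : Fin n, i.val < k ∧ ∃ x : Fin n →₀ ℕ, x i = 0 ∧ c.mk' x = c.mk' y by
    exact h _ y rfl
  intro N
  induction N using Nat.strong_induction_on with
  | _ N ih =>
    intro y hy
    by_cases hex : ∃ i : Fin n, i.val < k ∧ y i = 0
    · obtain ⟨i, hi, hyi⟩ := hex
      exact ⟨i, hi, y, hyi, rfl⟩
    · push_neg at hex
      have hpos : ∀ i : Fin n, i.val < k → 1 ≤ y i := by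
        intro i hi
        exact Nat.one_le_iff_ne_zero.mpr (hex i hi)
      have hsub : (y - wordOne n k) + wordOne n k = y := by
        ext j
        simp only [Finsupp.add_apply, Finsupp.tsub_apply, wordOne,
          Finsupp.coe_equivFunOnFinite_symm]
        by_cases hj : j.val < k
        · have := hpos j hj; simp [hj]; omega
        · simp [hj]
      have heq : c.mk' ((y - wordOne n k) + wordTwo n k a) = c.mk' y := by
        have h1 : c ((y - wordOne n k) + wordOne n k) ((y - wordOne n k) + wordTwo n k a) :=
          c.add (c.refl _) hrel
        rw [hsub] at h1
        exact ((AddCon.eq c).mpr h1).symm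
      set z := (y - wordOne n k) + wordTwo n k a with hz
      have hzval : ∀ i : Fin n, i.val < k → z i = y i - 1 := by
        intro i hi
        simp only [hz, Finsupp.add_apply, Finsupp.tsub_apply, wordOne, wordTwo,
          Finsupp.coe_equivFunOnFinite_symm]
        have : ¬ k ≤ i.val := by omega
        simp [hi, this]
      have hlt : (∑ i : Fin n, if i.val < k then z i else 0) < N := by
        rw [← hy]
        apply Finset.sum_lt_sum
        · intro i _
          by_cases hi : i.val < k
          · have := hpos i hi
            simp only [hi, if_true, hzval i hi]
            omega
          · simp [hi]
        · refine ⟨⟨0, by omega⟩, Finset.mem_univ _, ?_⟩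
          have h0 : (⟨0, by omega⟩ : Fin n).val < k := hk
          have := hpos _ h0
          simp only [h0, if_true, hzval _ h0]
          omega
      obtain ⟨i, hi, x, hx, hmk⟩ := ih _ hlt z rfl
      exact ⟨i, hi, x, hx, hmk.trans heq⟩
end

section
/- Let K be a field, let n and k be natural numbers with 0 < k < n, and let w₁, w₂ ∈ (Fin n →₀ ℕ) be nonzero words with supp(w₁) ⊆ {1,…,k} and supp(w₂) ⊆ {k+1,…,n} (so the supports are disjoint). Let S be the quotient of (Fin n →₀ ℕ) by the additive congruence generated by the single pair (w₁, w₂). Then the following are equivalent: (1) the semigroup algebra K[S] = AddMonoidAlgebra K S is an integral domain and is integrally closed (i.e. K[S] is a normal domain); (2) Hsupp(w₁) = ∅ or Hsupp(w₂) = ∅ (i.e. w₁ is square free or w₂ is square free). -/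
set_option linter.unusedSectionVars false
set_option maxHeartbeats 1000000

/-- The support of a word in the free abelian monoid `Fin n →₀ ℕ`. -/
def supp {n : ℕ} (w : Fin n →₀ ℕ) : Set (Fin n) := {i | w i ≠ 0}

/-- `Hsupp w` is the set of generators occurring in `w` with exponent at least `2`;
`w` is square free iff `Hsupp w = ∅`. -/
def Hsupp {n : ℕ} (w : Fin n →₀ ℕ) : Set (Fin n) := {i | 2 ≤ w i}

open Finsupp

noncomputable section Aux

variable {n : ℕ}

/-- cast ℕ-finsupp to ℤ-finsupp -/
def zc {n : ℕ} : (Fin n →₀ ℕ) →+ (Fin n →₀ ℤ) :=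
  Finsupp.mapRange.addMonoidHom (Nat.castAddMonoidHom ℤ)

lemma zc_apply (u : Fin n →₀ ℕ) (i : Fin n) : zc u i = (u i : ℤ) := rfl

lemma zc_injective : Function.Injective (zc (n := n)) :=
  Finsupp.mapRange_injective _ (by simp) (fun a b h => by simpa using h)

lemma zc_tsub {u v : Fin n →₀ ℕ} (h : v ≤ u) : zc (u - v) = zc u - zc v := by
  ext i
  have := Finsupp.le_def.mp h i
  simp [zc_apply, Finsupp.tsub_apply, Finsupp.sub_apply]
  omega

lemma zc_single (i : Fin n) (m : ℕ) : zc (Finsupp.single i m) = Finsupp.single i (m : ℤ) := by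
  ext x
  simp [zc_apply, Finsupp.single_apply, apply_ite (Nat.cast : ℕ → ℤ)]

lemma fs_coord {α M : Type*} [Zero M] {f g : α →₀ M} (h : f = g) (i : α) : f i = g i := by rw [h]

/-- the explicit congruence: `u ~ v` iff `u - v` is an integer multiple of `w₁ - w₂`. -/
def rcon (w₁ w₂ : Fin n →₀ ℕ) : AddCon (Fin n →₀ ℕ) where
  r u v := ∃ m : ℤ, zc u + m • zc w₂ = zc v + m • zc w₁
  iseqv := by
    constructor
    · exact fun u => ⟨0, by simp⟩
    · rintro u v ⟨m, h⟩
      refine ⟨-m, ?_⟩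
      ext i
      have := fs_coord h i
      simp only [Finsupp.add_apply, Finsupp.smul_apply, smul_eq_mul, neg_mul] at this ⊢
      linarith
    · rintro u v t ⟨m, h⟩ ⟨m', h'⟩
      refine ⟨m + m', ?_⟩
      ext i
      have h1 := fs_coord h i; have h2 := fs_coord h' i
      simp only [Finsupp.add_apply, Finsupp.smul_apply, smul_eq_mul, add_mul] at h1 h2 ⊢
      linarith
  add' := by
    rintro u v u' v' ⟨m, h⟩ ⟨m', h'⟩
    refine ⟨m + m', ?_⟩
    ext i
    have h1 := fs_coord h i; have h2 := fs_coord h' i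
    simp only [map_add, Finsupp.add_apply, Finsupp.smul_apply, smul_eq_mul, add_mul] at h1 h2 ⊢
    linarith

lemma rcon_r {w₁ w₂ u v : Fin n →₀ ℕ} :
    rcon w₁ w₂ u v ↔ ∃ m : ℤ, zc u + m • zc w₂ = zc v + m • zc w₁ := Iff.rfl

lemma rcon_comm (w₁ w₂ : Fin n →₀ ℕ) : rcon w₁ w₂ = rcon w₂ w₁ := by
  ext u v
  constructor <;> rintro ⟨m, h⟩ <;>
  · refine ⟨-m, ?_⟩
    ext i
    have := fs_coord h i
    simp only [Finsupp.add_apply, Finsupp.smul_apply, smul_eq_mul, neg_mul] at this ⊢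
    linarith

lemma conGen_eq_rcon (w₁ w₂ : Fin n →₀ ℕ)
    (hd : ∀ i, w₁ i = 0 ∨ w₂ i = 0) :
    addConGen (fun x y => x = w₁ ∧ y = w₂) = rcon w₁ w₂ := by
  apply le_antisymm
  · apply AddCon.addConGen_le.mpr
    rintro x y ⟨rfl, rfl⟩
    exact ⟨1, by simp [add_comm]⟩
  · set c := addConGen (fun x y => x = w₁ ∧ y = w₂) with hc
    have hbase : c w₁ w₂ := AddConGen.Rel.of _ _ ⟨rfl, rfl⟩
    have key : ∀ (m : ℕ) (u v : Fin n →₀ ℕ),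
        zc u + (m : ℤ) • zc w₂ = zc v + (m : ℤ) • zc w₁ → c u v := by
      intro m
      induction m with
      | zero =>
        intro u v h
        simp only [Nat.cast_zero, zero_smul, add_zero] at h
        rw [zc_injective h]
        exact c.refl v
      | succ m ih =>
        intro u v h
        have hle : w₁ ≤ u := by
          rw [Finsupp.le_def]
          intro i
          rcases hd i with h1 | h2
          · simp [h1]
          · have hco := fs_coord h i
            simp only [Finsupp.add_apply, Finsupp.smul_apply, smul_eq_mul, zc_apply, h2,
              Nat.cast_zero, mul_zero, add_zero] at hco
            have h1 : (1:ℤ) ≤ ((m:ℤ) + 1) := by omega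
            have h2' : (0:ℤ) ≤ (w₁ i : ℤ) := by positivity
            have := mul_le_mul_of_nonneg_right h1 h2'
            have : (w₁ i : ℤ) ≤ (u i : ℤ) := by push_cast at hco ⊢; nlinarith
            exact_mod_cast this
        have step : c u ((u - w₁) + w₂) := by
          have : c ((u - w₁) + w₁) ((u - w₁) + w₂) := c.add (c.refl _) hbase
          rwa [tsub_add_cancel_of_le hle] at this
        refine c.trans step (ih _ _ ?_)
        ext i
        have hco := fs_coord h i
        have hz : zc ((u - w₁) + w₂) = zc u - zc w₁ + zc w₂ := by
          rw [map_add, zc_tsub hle]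
        rw [hz]
        simp only [Finsupp.add_apply, Finsupp.sub_apply, Finsupp.smul_apply, smul_eq_mul] at hco ⊢
        push_cast at hco ⊢
        linarith [hco]
    rintro u v ⟨m, h⟩
    rcases m with m | m
    · exact key m u v (by exact_mod_cast h)
    · refine c.symm (key (m + 1) v u ?_)
      have hm : ((Int.negSucc m) : ℤ) = -((m : ℤ) + 1) := rfl
      rw [hm] at h
      ext i
      have hco := fs_coord h i
      simp only [Finsupp.add_apply, Finsupp.smul_apply, smul_eq_mul, neg_mul] at hco ⊢
      push_cast at hco ⊢
      linarith

end Aux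

open Finsupp

noncomputable section Generic

/-- Range of `mapDomain` along an injection. -/
lemma mapDomain_mem_range {α β M : Type*} [AddCommMonoid M] (f : α → β)
    (g : β →₀ M) (hs : ∀ b ∈ g.support, b ∈ Set.range f) :
    ∃ h : α →₀ M, Finsupp.mapDomain f h = g := by
  classical
  induction g using Finsupp.induction with
  | zero => exact ⟨0, Finsupp.mapDomain_zero⟩
  | single_add b m g hbg hm ih =>
    have hb : b ∈ Set.range f := by
      apply hs
      simp only [Finsupp.mem_support_iff, Finsupp.add_apply, Finsupp.single_apply, if_pos rfl]
      have : g b = 0 := Finsupp.notMem_support_iff.mp hbg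
      simp [this, hm]
    obtain ⟨a, rfl⟩ := hb
    obtain ⟨h', hh'⟩ := ih (fun x hx => by
      have hxb : x ≠ f a := fun h => hbg (h ▸ hx)
      apply hs
      rw [Finsupp.mem_support_iff, Finsupp.add_apply, Finsupp.single_apply,
        if_neg (fun h => hxb h.symm), zero_add]
      exact Finsupp.mem_support_iff.mp hx)
    exact ⟨Finsupp.single a m + h', by
      rw [Finsupp.mapDomain_add, Finsupp.mapDomain_single, hh']⟩

/-- fraction-ring criterion for a dense subring. -/
theorem isFractionRing_of_dense {A B : Type*} [CommRing A] [CommRing B] [IsDomain B]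
    (ρ : A →+* B) (hinj : Function.Injective ρ)
    (dense : ∀ b : B, ∃ a s, ρ s * b = ρ a ∧ s ≠ 0) :
    letI : Algebra A (FractionRing B) := ((algebraMap B (FractionRing B)).comp ρ).toAlgebra
    IsFractionRing A (FractionRing B) := by
  letI : Algebra A (FractionRing B) := ((algebraMap B (FractionRing B)).comp ρ).toAlgebra
  haveI : IsDomain A := hinj.isDomain ρ
  have halg : ∀ a : A, algebraMap A (FractionRing B) a = algebraMap B (FractionRing B) (ρ a) :=
    fun a => rfl
  have hBinj := IsFractionRing.injective B (FractionRing B)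
  refine ⟨⟨?_, ?_, ?_⟩⟩
  · rintro ⟨y, hy⟩
    have hy0 : y ≠ 0 := nonZeroDivisors.ne_zero hy
    have : ρ y ≠ 0 := fun h => hy0 (hinj (by rwa [map_zero]))
    have : algebraMap A (FractionRing B) y ≠ 0 := by
      rw [halg]
      exact fun h => this (hBinj (by rwa [map_zero]))
    exact isUnit_iff_ne_zero.mpr this
  · intro z
    obtain ⟨⟨b₁, b₂⟩, hb⟩ := IsLocalization.surj (nonZeroDivisors B) z
    obtain ⟨a₁, s₁, h₁, hs₁⟩ := dense b₁
    obtain ⟨a₂, s₂, h₂, hs₂⟩ := dense (b₂ : B)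
    have ha₂ : a₂ ≠ 0 := by
      intro h
      rw [h, map_zero] at h₂
      rcases mul_eq_zero.mp h₂ with h' | h'
      · exact hs₂ (hinj (by rwa [map_zero]))
      · exact nonZeroDivisors.ne_zero b₂.2 h'
    have hmem : a₂ * s₁ ∈ nonZeroDivisors A :=
      mem_nonZeroDivisors_of_ne_zero (mul_ne_zero ha₂ hs₁)
    refine ⟨⟨a₁ * s₂, ⟨a₂ * s₁, hmem⟩⟩, ?_⟩
    simp only [halg, map_mul]
    rw [← h₂, ← h₁]
    simp only [map_mul]
    rw [← hb]
    ring
  · intro a₁ a₂ h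
    simp only [halg] at h
    exact ⟨1, by rw [hinj (hBinj h)]⟩

end Generic

open Finsupp

lemma amaCoeff_ne {K G : Type*} [Field K] {f : AddMonoidAlgebra K G} (hf : f ≠ 0) :
    f.coeff ≠ 0 := fun h => hf (AddMonoidAlgebra.coeff_eq_zero.mp h)

noncomputable section Nu

variable {K : Type*} [Field K] {G : Type*} [AddCommGroup G] [UniqueSums G]

local notation "R" => AddMonoidAlgebra K G

/-- min of `lam` over the support -/
def nuu (lam : G →+ ℤ) (f : AddMonoidAlgebra K G) : ℤ :=
  if hf : f.coeff.support.Nonempty then f.coeff.support.inf' hf lam else 0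

variable (lam : G →+ ℤ)

lemma nuu_le {f : AddMonoidAlgebra K G} {z : G} (hz : z ∈ f.coeff.support) :
    nuu lam f ≤ lam z := by
  rw [nuu, dif_pos ⟨z, hz⟩]
  exact Finset.inf'_le _ hz

lemma le_nuu {f : AddMonoidAlgebra K G} {r : ℤ} (hf : f ≠ 0)
    (h : ∀ z ∈ f.coeff.support, r ≤ lam z) : r ≤ nuu lam f := by
  rw [nuu, dif_pos (Finsupp.support_nonempty_iff.mpr (amaCoeff_ne hf))]
  exact Finset.le_inf' _ _ h

lemma exists_nuu {f : AddMonoidAlgebra K G} (hf : f ≠ 0) :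
    ∃ z ∈ f.coeff.support, lam z = nuu lam f := by
  rw [nuu, dif_pos (Finsupp.support_nonempty_iff.mpr (amaCoeff_ne hf))]
  obtain ⟨z, hz, he⟩ := Finset.exists_mem_eq_inf'
    (Finsupp.support_nonempty_iff.mpr (amaCoeff_ne hf)) lam
  exact ⟨z, hz, he.symm⟩

lemma mul_support_bound {f g : AddMonoidAlgebra K G} {r s : ℤ}
    (hf : ∀ a ∈ f.coeff.support, r ≤ lam a) (hg : ∀ b ∈ g.coeff.support, s ≤ lam b) :
    ∀ z ∈ (f * g).coeff.support, r + s ≤ lam z := by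
  classical
  intro z hz
  have := AddMonoidAlgebra.support_coeff_mul_subset f g hz
  rw [Finset.mem_add] at this
  obtain ⟨a, ha, b, hb, rfl⟩ := this
  rw [map_add]
  exact add_le_add (hf a ha) (hg b hb)

lemma nuu_mul_exists {f g : AddMonoidAlgebra K G} (hf : f ≠ 0) (hg : g ≠ 0) :
    ∃ z ∈ (f * g).coeff.support, lam z = nuu lam f + nuu lam g := by
  classical
  set f₀ : R := AddMonoidAlgebra.ofCoeff (f.coeff.filter (fun z => lam z = nuu lam f)) with hf₀
  set f₁ : R := AddMonoidAlgebra.ofCoeff (f.coeff.filter (fun z => ¬ lam z = nuu lam f)) with hf₁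
  set g₀ : R := AddMonoidAlgebra.ofCoeff (g.coeff.filter (fun z => lam z = nuu lam g)) with hg₀
  set g₁ : R := AddMonoidAlgebra.ofCoeff (g.coeff.filter (fun z => ¬ lam z = nuu lam g)) with hg₁
  have hfd : f₀ + f₁ = f := congrArg AddMonoidAlgebra.ofCoeff (Finsupp.filter_pos_add_filter_neg f.coeff (fun z => lam z = nuu lam f))
  have hgd : g₀ + g₁ = g := congrArg AddMonoidAlgebra.ofCoeff (Finsupp.filter_pos_add_filter_neg g.coeff (fun z => lam z = nuu lam g))
  have hf₀supp : ∀ a ∈ f₀.coeff.support, lam a = nuu lam f := by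
    intro a ha; rw [hf₀, AddMonoidAlgebra.coeff_ofCoeff, Finsupp.support_filter, Finset.mem_filter] at ha; exact ha.2
  have hg₀supp : ∀ b ∈ g₀.coeff.support, lam b = nuu lam g := by
    intro b hb; rw [hg₀, AddMonoidAlgebra.coeff_ofCoeff, Finsupp.support_filter, Finset.mem_filter] at hb; exact hb.2
  have hf₁supp : ∀ a ∈ f₁.coeff.support, nuu lam f + 1 ≤ lam a := by
    intro a ha; rw [hf₁, AddMonoidAlgebra.coeff_ofCoeff, Finsupp.support_filter, Finset.mem_filter] at ha
    have := nuu_le lam ha.1; omega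
  have hg₁supp : ∀ b ∈ g₁.coeff.support, nuu lam g + 1 ≤ lam b := by
    intro b hb; rw [hg₁, AddMonoidAlgebra.coeff_ofCoeff, Finsupp.support_filter, Finset.mem_filter] at hb
    have := nuu_le lam hb.1; omega
  have hf₀ne : f₀ ≠ 0 := by
    obtain ⟨z, hz, he⟩ := exists_nuu lam hf
    intro h
    have : f₀.coeff z = f.coeff z := Finsupp.filter_apply_pos (fun z => lam z = nuu lam f) f.coeff he
    rw [h] at this
    exact Finsupp.mem_support_iff.mp hz this.symm
  have hg₀ne : g₀ ≠ 0 := by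
    obtain ⟨z, hz, he⟩ := exists_nuu lam hg
    intro h
    have : g₀.coeff z = g.coeff z := Finsupp.filter_apply_pos (fun z => lam z = nuu lam g) g.coeff he
    rw [h] at this
    exact Finsupp.mem_support_iff.mp hz this.symm
  have h00 : f₀ * g₀ ≠ 0 := mul_ne_zero hf₀ne hg₀ne
  obtain ⟨z, hz⟩ := Finsupp.support_nonempty_iff.mpr (amaCoeff_ne h00)
  have hlamz : lam z = nuu lam f + nuu lam g := by
    have := AddMonoidAlgebra.support_coeff_mul_subset f₀ g₀ hz
    rw [Finset.mem_add] at this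
    obtain ⟨a, ha, b, hb, rfl⟩ := this
    rw [map_add, hf₀supp a ha, hg₀supp b hb]
  refine ⟨z, ?_, hlamz⟩
  have hdecomp : f * g = f₀ * g₀ + (f₀ * g₁ + (f₁ * g₀ + f₁ * g₁)) := by
    rw [← hfd, ← hgd]; ring
  have hnot : ∀ (u v : R) (r s : ℤ), (∀ a ∈ u.coeff.support, r ≤ lam a) →
      (∀ b ∈ v.coeff.support, s ≤ lam b) → nuu lam f + nuu lam g < r + s → (u * v).coeff z = 0 := by
    intro u v r s hu hv hlt
    by_contra h
    have := mul_support_bound lam hu hv z (Finsupp.mem_support_iff.mpr h)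
    omega
  rw [Finsupp.mem_support_iff]
  have happ : (f * g).coeff z = (f₀*g₀).coeff z + ((f₀*g₁).coeff z + ((f₁*g₀).coeff z + (f₁*g₁).coeff z)) := by
    rw [hdecomp]; rfl
  rw [happ]
  rw [hnot f₀ g₁ (nuu lam f) (nuu lam g + 1) (fun a ha => (hf₀supp a ha).ge) hg₁supp (by omega),
    hnot f₁ g₀ (nuu lam f + 1) (nuu lam g) hf₁supp (fun b hb => (hg₀supp b hb).ge) (by omega),
    hnot f₁ g₁ (nuu lam f + 1) (nuu lam g + 1) hf₁supp hg₁supp (by omega)]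
  simpa using Finsupp.mem_support_iff.mp hz

lemma nuu_pow {f : AddMonoidAlgebra K G} (hf : f ≠ 0) (m : ℕ) :
    f ^ m ≠ 0 ∧ nuu lam (f ^ m) = (m : ℤ) * nuu lam f := by
  induction m with
  | zero =>
    refine ⟨one_ne_zero, ?_⟩
    have h1 : (1 : R).coeff.support = {0} := by
      rw [AddMonoidAlgebra.one_def, AddMonoidAlgebra.coeff_single]
      exact Finsupp.support_single_ne_zero _ one_ne_zero
    rw [pow_zero, nuu, dif_pos (by rw [h1]; exact ⟨0, Finset.mem_singleton_self 0⟩)]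
    simp [h1]
  | succ m ih =>
    obtain ⟨hne, hval⟩ := ih
    have hne' : f ^ (m + 1) ≠ 0 := by rw [pow_succ]; exact mul_ne_zero hne hf
    refine ⟨hne', le_antisymm ?_ ?_⟩
    · obtain ⟨z, hz, he⟩ := nuu_mul_exists lam hne hf
      rw [← pow_succ] at hz
      have := nuu_le lam hz
      rw [he, hval] at this
      push_cast
      linarith
    · apply le_nuu lam hne'
      rw [pow_succ]
      intro z hz
      have := mul_support_bound lam
        (fun a ha => (hval ▸ nuu_le lam ha : (m : ℤ) * nuu lam f ≤ lam a))
        (fun b hb => nuu_le lam hb) z hz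
      push_cast
      linarith

/-- Key lemma: a root of a monic polynomial whose coefficients are `lam`-nonnegative
has `lam`-nonnegative support. -/
lemma support_nonneg_of_root (y : AddMonoidAlgebra K G) (p : Polynomial (AddMonoidAlgebra K G))
    (hm : p.Monic) (heval : p.eval y = 0)
    (hcoeff : ∀ i, ∀ z ∈ (p.coeff i).coeff.support, 0 ≤ lam z) :
    ∀ z ∈ y.coeff.support, 0 ≤ lam z := by
  classical
  intro z₀ hz₀
  by_contra hneg
  push_neg at hneg
  have hy : y ≠ 0 := fun h => by simp [h] at hz₀
  have hν : nuu lam y < 0 := lt_of_le_of_lt (nuu_le lam hz₀) hneg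
  set d := p.natDegree with hd
  have hd0 : d ≠ 0 := by
    intro h
    have : p = 1 := (Polynomial.Monic.natDegree_eq_zero hm).mp h
    rw [this] at heval
    simp at heval
  have hexp : y ^ d = - ∑ i ∈ Finset.range d, p.coeff i * y ^ i := by
    have := Polynomial.eval_eq_sum_range (p := p) y
    rw [heval, Finset.sum_range_succ, Polynomial.Monic.coeff_natDegree hm, one_mul] at this
    rw [← hd] at this
    linear_combination -this
  obtain ⟨hpne, hpval⟩ := nuu_pow lam hy d
  obtain ⟨z, hz, hze⟩ := exists_nuu lam hpne
  rw [hpval] at hze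
  rw [hexp] at hz
  rw [AddMonoidAlgebra.coeff_neg, Finsupp.support_neg, AddMonoidAlgebra.coeff_sum] at hz
  have := Finsupp.support_finset_sum hz
  rw [Finset.mem_biUnion] at this
  obtain ⟨i, hi, hzi⟩ := this
  rw [Finset.mem_range] at hi
  have hb1 : ∀ a ∈ (p.coeff i).coeff.support, (0:ℤ) ≤ lam a := hcoeff i
  have hb2 : ∀ b ∈ (y ^ i).coeff.support, (i:ℤ) * nuu lam y ≤ lam b := by
    intro b hb
    have := (nuu_pow lam hy i).2
    exact this ▸ nuu_le lam hb
  have hge := mul_support_bound lam hb1 hb2 z hzi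
  have hlt : (d:ℤ) * nuu lam y < (i:ℤ) * nuu lam y := by
    apply mul_lt_mul_of_neg_right _ hν
    exact_mod_cast hi
  omega

end Nu

noncomputable section BackMonoid

open Finsupp

/-- index type with `i₀` removed -/
abbrev Fm (n : ℕ) (i₀ : Fin n) : Type := {i : Fin n // i ≠ i₀}

abbrev Zp (n : ℕ) (i₀ : Fin n) : Type := Fm n i₀ →₀ ℤ

variable {n : ℕ}

/-- the elimination map -/
def phi (w₁ w₂ : Fin n →₀ ℕ) (i₀ : Fin n) : (Fin n →₀ ℕ) →+ Zp n i₀ where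
  toFun u := Finsupp.subtypeDomain (· ≠ i₀) (zc u) +
    (u i₀ : ℤ) • (Finsupp.subtypeDomain (· ≠ i₀) (zc w₂) - Finsupp.subtypeDomain (· ≠ i₀) (zc w₁))
  map_zero' := by simp
  map_add' u v := by
    ext j
    simp only [map_add, Finsupp.subtypeDomain_add, Finsupp.add_apply, Finsupp.smul_apply,
      Finsupp.sub_apply, Finsupp.subtypeDomain_apply, smul_eq_mul, zc_apply, Finsupp.coe_add,
      Pi.add_apply]
    push_cast
    ring

lemma phi_apply (w₁ w₂ : Fin n →₀ ℕ) (i₀ : Fin n) (u : Fin n →₀ ℕ) (j : Fm n i₀) :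
    phi w₁ w₂ i₀ u j = (u j.1 : ℤ) + (u i₀ : ℤ) * ((w₂ j.1 : ℤ) - (w₁ j.1 : ℤ)) := by
  simp only [phi, AddMonoidHom.coe_mk, ZeroHom.coe_mk, Finsupp.add_apply, Finsupp.smul_apply,
    Finsupp.sub_apply, Finsupp.subtypeDomain_apply, smul_eq_mul, zc_apply]

lemma w2i₀ {w₁ w₂ : Fin n →₀ ℕ} {i₀ : Fin n} (hi₀ : w₁ i₀ = 1)
    (hd : ∀ i, w₁ i = 0 ∨ w₂ i = 0) : w₂ i₀ = 0 := by
  rcases hd i₀ with h | h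
  · omega
  · exact h

lemma phi_eq_iff {w₁ w₂ : Fin n →₀ ℕ} {i₀ : Fin n} (hi₀ : w₁ i₀ = 1)
    (hd : ∀ i, w₁ i = 0 ∨ w₂ i = 0) (u v : Fin n →₀ ℕ) :
    phi w₁ w₂ i₀ u = phi w₁ w₂ i₀ v ↔ rcon w₁ w₂ u v := by
  have h2 : w₂ i₀ = 0 := w2i₀ hi₀ hd
  constructor
  · intro h
    refine ⟨(u i₀ : ℤ) - (v i₀ : ℤ), ?_⟩
    ext x
    simp only [Finsupp.add_apply, Finsupp.smul_apply, smul_eq_mul, zc_apply]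
    rcases eq_or_ne x i₀ with rfl | hx
    · rw [hi₀, h2]; push_cast; ring
    · have h0 := fs_coord h ⟨x, hx⟩
      rw [phi_apply, phi_apply] at h0
      linear_combination h0
  · rintro ⟨m, h⟩
    ext j
    rw [phi_apply, phi_apply]
    have hj := fs_coord h j.1
    have hi := fs_coord h i₀
    simp only [Finsupp.add_apply, Finsupp.smul_apply, smul_eq_mul, zc_apply] at hj hi
    rw [hi₀, h2] at hi
    push_cast at hi
    linear_combination hj + ((w₂ j.1 : ℤ) - (w₁ j.1 : ℤ)) * hi

/-- conditions cutting out the image of `phi` -/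
def Tcond (w₁ w₂ : Fin n →₀ ℕ) (i₀ : Fin n) (v : Zp n i₀) : Prop :=
  (∀ j : Fm n i₀, w₁ j.1 = 0 → 0 ≤ v j) ∧
  (∀ a b : Fm n i₀, w₁ a.1 ≠ 0 → w₂ b.1 ≠ 0 → 0 ≤ v b + (w₂ b.1 : ℤ) * v a)

lemma Tcond_of_nonneg (w₁ w₂ : Fin n →₀ ℕ) (i₀ : Fin n) (v : Zp n i₀)
    (h : ∀ j, 0 ≤ v j) : Tcond w₁ w₂ i₀ v := by
  constructor
  · intro j _; exact h j
  · intro a b _ _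
    have h1 := h a; have h2 := h b
    positivity

lemma phi_Tcond {w₁ w₂ : Fin n →₀ ℕ} {i₀ : Fin n}
    (hd : ∀ i, w₁ i = 0 ∨ w₂ i = 0) (hsf : ∀ i, w₁ i ≤ 1) (u : Fin n →₀ ℕ) :
    Tcond w₁ w₂ i₀ (phi w₁ w₂ i₀ u) := by
  constructor
  · intro j hj
    rw [phi_apply, hj]
    have h1 : (0:ℤ) ≤ (u j.1 : ℤ) := by positivity
    have h2 : (0:ℤ) ≤ (u i₀ : ℤ) * (w₂ j.1 : ℤ) := by positivity
    push_cast
    linarith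
  · intro a b ha hb
    have hw1a : w₁ a.1 = 1 := le_antisymm (hsf a.1) (by omega)
    have hw2a : w₂ a.1 = 0 := (hd a.1).resolve_left ha
    have hw1b : w₁ b.1 = 0 := by
      rcases hd b.1 with h | h
      · exact h
      · exact absurd h hb
    rw [phi_apply, phi_apply, hw1a, hw2a, hw1b]
    have h1 : (0:ℤ) ≤ (u b.1 : ℤ) := by positivity
    have h2 : (0:ℤ) ≤ (w₂ b.1 : ℤ) * (u a.1 : ℤ) := by positivity
    push_cast
    linarith

lemma Tcond_mem {w₁ w₂ : Fin n →₀ ℕ} {i₀ : Fin n}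
    (hd : ∀ i, w₁ i = 0 ∨ w₂ i = 0) (hsf : ∀ i, w₁ i ≤ 1)
    (v : Zp n i₀) (hv : Tcond w₁ w₂ i₀ v) : ∃ u, phi w₁ w₂ i₀ u = v := by
  classical
  set A' : Finset (Fm n i₀) := Finset.univ.filter (fun a => w₁ a.1 ≠ 0) with hA'
  set mset : Finset ℤ := insert (0:ℤ) (A'.image fun a => -v a) with hmset
  have hne : mset.Nonempty := ⟨0, Finset.mem_insert_self _ _⟩
  set m : ℤ := mset.max' hne with hm
  have hm0 : 0 ≤ m := Finset.le_max' _ 0 (Finset.mem_insert_self _ _)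
  have hma : ∀ a ∈ A', -v a ≤ m := by
    intro a ha
    apply Finset.le_max'
    rw [hmset]
    exact Finset.mem_insert_of_mem (Finset.mem_image_of_mem _ ha)
  have hcase : m = 0 ∨ ∃ a ∈ A', m = -v a := by
    have hmem : m ∈ insert (0:ℤ) (A'.image fun a => -v a) := Finset.max'_mem mset hne
    rcases Finset.mem_insert.mp hmem with h | h
    · exact Or.inl h
    · rw [Finset.mem_image] at h
      obtain ⟨a, ha, he⟩ := h
      exact Or.inr ⟨a, ha, he.symm⟩
  have huz : ∀ j : Fm n i₀, 0 ≤ v j - m * ((w₂ j.1 : ℤ) - (w₁ j.1 : ℤ)) := by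
    intro j
    by_cases hj1 : w₁ j.1 = 0
    · by_cases hj2 : w₂ j.1 = 0
      · rw [hj1, hj2]
        have := hv.1 j hj1
        push_cast
        linarith
      · rw [hj1]
        rcases hcase with h | ⟨a, ha, he⟩
        · rw [h]
          have := hv.1 j hj1
          push_cast
          linarith
        · have ha' : w₁ a.1 ≠ 0 := by
            rw [hA', Finset.mem_filter] at ha
            exact ha.2
          have := hv.2 a j ha' hj2
          rw [he]
          push_cast
          linarith
    · have hw1j : w₁ j.1 = 1 := le_antisymm (hsf j.1) (by omega)
      have hw2j : w₂ j.1 = 0 := (hd j.1).resolve_left hj1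
      rw [hw1j, hw2j]
      have : -v j ≤ m := hma j (by rw [hA', Finset.mem_filter]; exact ⟨Finset.mem_univ _, hj1⟩)
      push_cast
      linarith
  set u : Fin n →₀ ℕ := Finsupp.equivFunOnFinite.symm
    (fun x => if h : x = i₀ then m.toNat
      else (v ⟨x, h⟩ - m * ((w₂ x : ℤ) - (w₁ x : ℤ))).toNat) with hu
  have hu_apply : ∀ x, u x = if h : x = i₀ then m.toNat
      else (v ⟨x, h⟩ - m * ((w₂ x : ℤ) - (w₁ x : ℤ))).toNat := fun x => rfl
  have hui₀ : u i₀ = m.toNat := by rw [hu_apply, dif_pos rfl]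
  refine ⟨u, ?_⟩
  ext j
  rw [phi_apply, hui₀, hu_apply j.1, dif_neg j.2]
  rw [Int.toNat_of_nonneg (huz j), Int.toNat_of_nonneg hm0]
  ring

end BackMonoid

noncomputable section Laurent

open Finsupp

variable {K : Type*} [Field K] {σ : Type*} [Fintype σ]

/-- bound for negativity of supports -/
def suppBound (f : AddMonoidAlgebra K (σ →₀ ℤ)) : ℕ :=
  f.coeff.support.sup fun z => z.support.sup fun j => (-z j).toNat

lemma suppBound_spec (f : AddMonoidAlgebra K (σ →₀ ℤ)) {z : σ →₀ ℤ} (hz : z ∈ f.coeff.support) (j : σ) :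
    0 ≤ z j + (suppBound f : ℤ) := by
  rcases le_or_gt 0 (z j) with h | h
  · positivity
  · have hj : j ∈ z.support := Finsupp.mem_support_iff.mpr (by omega)
    have h1 : (-z j).toNat ≤ z.support.sup fun j => (-z j).toNat :=
      Finset.le_sup (f := fun j => (-z j).toNat) hj
    have h2 : (z.support.sup fun j => (-z j).toNat) ≤ suppBound f :=
      Finset.le_sup (f := fun z => z.support.sup fun j => (-z j).toNat) hz
    have h3 := Int.self_le_toNat (-z j)
    have h4 : ((-z j).toNat : ℤ) ≤ (suppBound f : ℤ) := by exact_mod_cast le_trans h1 h2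
    omega

/-- the natural inclusion of exponents -/
def zn : (σ →₀ ℕ) →+ (σ →₀ ℤ) := Finsupp.mapRange.addMonoidHom (Nat.castAddMonoidHom ℤ)

lemma zn_apply (u : σ →₀ ℕ) (j : σ) : zn u j = (u j : ℤ) := rfl

lemma zn_injective : Function.Injective (zn (σ := σ)) :=
  Finsupp.mapRange_injective _ (by simp) (fun a b h => by simpa using h)

lemma zn_range {z : σ →₀ ℤ} (h : ∀ j, 0 ≤ z j) : z ∈ Set.range (zn (σ := σ)) := by
  refine ⟨Finsupp.equivFunOnFinite.symm (fun j => (z j).toNat), ?_⟩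
  ext j
  rw [zn_apply]
  have : (Finsupp.equivFunOnFinite.symm (fun j => (z j).toNat)) j = (z j).toNat := rfl
  rw [this, Int.toNat_of_nonneg (h j)]

/-- constant vector -/
def constN (M : ℕ) : σ →₀ ℕ := Finsupp.equivFunOnFinite.symm (fun _ => M)

lemma constN_apply (M : ℕ) (j : σ) : (constN M : σ →₀ ℕ) j = M := rfl

lemma zn_constN (M : ℕ) (j : σ) : zn (constN M : σ →₀ ℕ) j = (M : ℤ) := rfl

variable (K σ)

theorem laurent_integrallyClosed [DecidableEq σ] :
    IsDomain (AddMonoidAlgebra K (σ →₀ ℤ)) ∧ IsIntegrallyClosed (AddMonoidAlgebra K (σ →₀ ℤ)) := by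
  classical
  set Rz := AddMonoidAlgebra K (σ →₀ ℤ) with hRz
  haveI hdom : IsDomain Rz := NoZeroDivisors.to_isDomain _
  set ρ : AddMonoidAlgebra K (σ →₀ ℕ) →+* Rz := AddMonoidAlgebra.mapDomainRingHom K (zn (σ := σ))
    with hρ
  have hρcoe : ∀ y, ρ y = AddMonoidAlgebra.mapDomain (zn (σ := σ)) y := fun _ => rfl
  have hρinj : Function.Injective ρ := AddMonoidAlgebra.mapDomain_injective zn_injective
  have hρsingle : ∀ (a : σ →₀ ℕ) (r : K), ρ (AddMonoidAlgebra.single a r) = AddMonoidAlgebra.single (zn a) r := by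
    intro a r
    rw [hρcoe, AddMonoidAlgebra.mapDomain_single]
  have hrange : ∀ f : Rz, (∀ z ∈ f.coeff.support, ∀ j, 0 ≤ z j) → ∃ y, ρ y = f := by
    intro f hf
    obtain ⟨y, hy⟩ := mapDomain_mem_range (zn (σ := σ)) f.coeff (fun z hz => zn_range (hf z hz))
    exact ⟨AddMonoidAlgebra.ofCoeff y, by rw [hρcoe]; exact congrArg AddMonoidAlgebra.ofCoeff hy⟩
  -- density
  have dense : ∀ f : Rz, ∃ a s, ρ s * f = ρ a ∧ s ≠ 0 := by
    intro f
    set M := suppBound f with hM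
    set sM : Rz := AddMonoidAlgebra.single (zn (constN M)) (1:K) with hsM
    have hsupp : ∀ z' ∈ (sM * f).coeff.support, ∀ j, 0 ≤ z' j := by
      intro z' hz' j
      have h1 := AddMonoidAlgebra.support_coeff_mul_subset sM f hz'
      rw [Finset.mem_add] at h1
      obtain ⟨a, ha, b, hb, rfl⟩ := h1
      have ha' : a = zn (constN M) := by
        rw [hsM, AddMonoidAlgebra.coeff_single] at ha
        simpa using Finsupp.support_single_subset ha
      rw [ha', Finsupp.add_apply, zn_constN]
      have := suppBound_spec f hb j
      omega
    obtain ⟨a, ha⟩ := hrange _ hsupp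
    refine ⟨a, AddMonoidAlgebra.single (constN M) (1:K), ?_,
      fun h => one_ne_zero (α := K) (AddMonoidAlgebra.single_eq_zero.mp h)⟩
    rw [show ρ (AddMonoidAlgebra.single (constN M) (1:K)) = sM from hρsingle _ _, ha]
  refine ⟨hdom, ?_⟩
  letI algA : Algebra (AddMonoidAlgebra K (σ →₀ ℕ)) (FractionRing Rz) :=
    ((algebraMap Rz (FractionRing Rz)).comp ρ).toAlgebra
  haveI fr0 : IsFractionRing (AddMonoidAlgebra K (σ →₀ ℕ)) (FractionRing Rz) :=
    isFractionRing_of_dense ρ hρinj dense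
  haveI icc : IsIntegrallyClosed (AddMonoidAlgebra K (σ →₀ ℕ)) := by
    have h2 : IsIntegrallyClosed (MvPolynomial σ K) := by
      have h1 : UniqueFactorizationMonoid (MvPolynomial σ K) :=
        MvPolynomial.uniqueFactorizationMonoid _
      exact GCDMonoid.toIsIntegrallyClosed (h := ⟨(UniqueFactorizationMonoid.toGCDMonoid _)⟩)
    exact h2
  rw [isIntegrallyClosed_iff (FractionRing Rz)]
  intro x hx
  obtain ⟨p, pm, hp⟩ := hx
  set d := p.natDegree with hdd
  set M : ℕ := (Finset.range (d+1)).sup (fun i => suppBound (p.coeff i)) with hMdef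
  set t : σ →₀ ℤ := zn (constN M) with htdef
  set μ : Rz := AddMonoidAlgebra.single t (1:K) with hμdef
  set p' := p.scaleRoots μ with hp'def
  have pm' : p'.Monic := (Polynomial.monic_scaleRoots_iff μ).mpr pm
  have hroot : Polynomial.eval₂ (algebraMap Rz (FractionRing Rz))
      ((algebraMap Rz (FractionRing Rz)) μ * x) p' = 0 :=
    Polynomial.scaleRoots_eval₂_eq_zero _ hp
  have hlift : p' ∈ Polynomial.lifts ρ := by
    rw [Polynomial.lifts_iff_coeff_lifts]
    intro i
    rcases lt_trichotomy i d with hi | rfl | hi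
    · have hco : p'.coeff i =
          p.coeff i * AddMonoidAlgebra.single (((d - i) : ℕ) • t) (1:K) := by
        rw [hp'def, Polynomial.coeff_scaleRoots, hμdef, AddMonoidAlgebra.single_pow, one_pow]
      rw [hco]
      have hsupp : ∀ z' ∈ (p.coeff i * AddMonoidAlgebra.single (((d - i) : ℕ) • t) (1:K)).coeff.support,
          ∀ j, 0 ≤ z' j := by
        intro z' hz' j
        have h1 := AddMonoidAlgebra.support_coeff_mul_subset
          (p.coeff i) (AddMonoidAlgebra.single (((d - i) : ℕ) • t) (1:K)) hz'
        rw [Finset.mem_add] at h1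
        obtain ⟨z, hz, b, hb, rfl⟩ := h1
        have hb' : b = ((d - i) : ℕ) • t := by rw [AddMonoidAlgebra.coeff_single] at hb; simpa using Finsupp.support_single_subset hb
        have hbj : b j = ((d - i : ℕ) : ℤ) * (M : ℤ) := by
          rw [hb', Finsupp.smul_apply]
          rw [htdef, zn_constN]
          simp
        have hsb : suppBound (p.coeff i) ≤ M :=
          Finset.le_sup (f := fun i => suppBound (p.coeff i))
            (Finset.mem_range.mpr (by omega))
        have hzz := suppBound_spec (p.coeff i) hz j
        have hd1 : (1:ℤ) ≤ ((d - i : ℕ) : ℤ) := by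
          have : 1 ≤ d - i := by omega
          exact_mod_cast this
        have hMM : (M:ℤ) ≤ ((d - i : ℕ) : ℤ) * (M : ℤ) :=
          le_mul_of_one_le_left (by positivity) hd1
        have hsb' : (suppBound (p.coeff i) : ℤ) ≤ (M : ℤ) := by exact_mod_cast hsb
        rw [Finsupp.add_apply, hbj]
        linarith
      obtain ⟨y, hy⟩ := hrange _ hsupp
      exact ⟨y, hy⟩
    · refine ⟨1, ?_⟩
      rw [map_one, hp'def, Polynomial.coeff_scaleRoots]
      rw [show p.natDegree - d = 0 by omega, pow_zero, mul_one]
      exact (pm.coeff_natDegree).symm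
    · refine ⟨0, ?_⟩
      rw [map_zero, hp'def, Polynomial.coeff_scaleRoots,
        Polynomial.coeff_eq_zero_of_natDegree_lt (by omega : p.natDegree < i), zero_mul]
  obtain ⟨q, hq, hqdeg, hqm⟩ := Polynomial.lifts_and_degree_eq_and_monic hlift pm'
  have hint : IsIntegral (AddMonoidAlgebra K (σ →₀ ℕ))
      ((algebraMap Rz (FractionRing Rz)) μ * x) := by
    refine ⟨q, hqm, ?_⟩
    have hcomp : algebraMap (AddMonoidAlgebra K (σ →₀ ℕ)) (FractionRing Rz) =
        (algebraMap Rz (FractionRing Rz)).comp ρ := rfl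
    rw [hcomp, ← Polynomial.eval₂_map, hq, hroot]
  obtain ⟨y₀, hy₀⟩ := IsIntegrallyClosed.isIntegral_iff.mp hint
  have hy₀' : algebraMap Rz (FractionRing Rz) (ρ y₀) =
      algebraMap Rz (FractionRing Rz) μ * x := hy₀
  refine ⟨ρ y₀ * AddMonoidAlgebra.single (-t) (1:K), ?_⟩
  have hμinv : μ * AddMonoidAlgebra.single (-t) (1:K) = 1 := by
    rw [hμdef, AddMonoidAlgebra.single_mul_single, add_neg_cancel, mul_one]
    exact (AddMonoidAlgebra.one_def).symm
  rw [map_mul, hy₀', mul_comm _ x, mul_assoc, ← map_mul, hμinv, map_one, mul_one]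

end Laurent

noncomputable section Forward

open Finsupp

lemma forward_false {n : ℕ} (K : Type*) [Field K] (w₁ w₂ : Fin n →₀ ℕ)
    (hd : ∀ i, w₁ i = 0 ∨ w₂ i = 0) {i j : Fin n} (hi : 2 ≤ w₁ i) (hj : 2 ≤ w₂ j)
    (c : AddCon (Fin n →₀ ℕ)) (hc : c = rcon w₁ w₂)
    [hdom : IsDomain (AddMonoidAlgebra K c.Quotient)]
    (hic : IsIntegrallyClosed (AddMonoidAlgebra K c.Quotient)) : False := by
  classical
  have hw1i : w₁ i ≠ 0 := by omega
  have hw2j : w₂ j ≠ 0 := by omega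
  have hw2i : w₂ i = 0 := (hd i).resolve_left hw1i
  have hw1j : w₁ j = 0 := by
    rcases hd j with h | h
    · exact h
    · exact absurd h hw2j
  have hij : i ≠ j := fun h => hw2j (h ▸ hw2i)
  set S := c.Quotient
  set R := AddMonoidAlgebra K S with hR
  set FR := FractionRing R with hFR
  set u₁ : Fin n →₀ ℕ := w₁ - Finsupp.single i 1 with hu₁
  set t : Fin n →₀ ℕ := (w₁ - Finsupp.single i 2) + (w₂ - Finsupp.single j 2) with ht
  have hle1 : Finsupp.single i 1 ≤ w₁ := by
    rw [Finsupp.le_def]; intro x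
    rcases eq_or_ne i x with rfl | hx
    · simp; omega
    · simp [Finsupp.single_apply, hx]
  have hle2 : Finsupp.single i 2 ≤ w₁ := by
    rw [Finsupp.le_def]; intro x
    rcases eq_or_ne i x with rfl | hx
    · simp; omega
    · simp [Finsupp.single_apply, hx]
  have hle3 : Finsupp.single j 2 ≤ w₂ := by
    rw [Finsupp.le_def]; intro x
    rcases eq_or_ne j x with rfl | hx
    · simp; omega
    · simp [Finsupp.single_apply, hx]
  -- the relation
  have hrel : c (u₁ + u₁) (t + (Finsupp.single j 1 + Finsupp.single j 1)) := by
    rw [hc, rcon_r]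
    refine ⟨1, ?_⟩
    ext x
    simp only [ht, hu₁, map_add, zc_tsub hle1, zc_tsub hle2, zc_tsub hle3, zc_single, one_smul,
      Finsupp.add_apply, Finsupp.sub_apply, zc_apply, Finsupp.single_apply]
    split_ifs with h1 h2
    · exact absurd (h1.trans h2.symm) hij
    all_goals push_cast; omega
  -- elements
  set A : R := AddMonoidAlgebra.single (c.mk' u₁) (1:K) with hA
  set B : R := AddMonoidAlgebra.single (c.mk' (Finsupp.single j 1)) (1:K) with hB
  set Cc : R := AddMonoidAlgebra.single (c.mk' t) (1:K) with hCc
  have hrel2 : c.mk' u₁ + c.mk' u₁ = c.mk' t + (c.mk' (Finsupp.single j 1) + c.mk' (Finsupp.single j 1)) := by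
    rw [← map_add, ← map_add, ← map_add]
    exact (AddCon.eq c).mpr hrel
  have hA2 : A * A = Cc * (B * B) := by
    rw [hA, hB, hCc]
    rw [AddMonoidAlgebra.single_mul_single, AddMonoidAlgebra.single_mul_single,
      AddMonoidAlgebra.single_mul_single]
    rw [hrel2]
    simp
  have hBne0 : B ≠ 0 := by
    rw [hB]
    exact fun h => one_ne_zero (α := K) (AddMonoidAlgebra.single_eq_zero.mp h)
  have hAlgInj : Function.Injective (algebraMap R FR) := IsFractionRing.injective R FR
  have hBne : algebraMap R FR B ≠ 0 := fun h => hBne0 (hAlgInj (by rw [h, map_zero]))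
  set ζ : FR := algebraMap R FR A / algebraMap R FR B with hζ
  have hBBne : algebraMap R FR (B * B) ≠ 0 := by
    rw [map_mul]; exact mul_ne_zero hBne hBne
  have hz2 : ζ ^ 2 = algebraMap R FR Cc := by
    rw [hζ, div_pow, pow_two, pow_two, ← map_mul, ← map_mul, hA2, map_mul, mul_div_assoc,
      div_self hBBne, mul_one]
  have hζint : IsIntegral R ζ := by
    refine ⟨Polynomial.X ^ 2 - Polynomial.C Cc, Polynomial.monic_X_pow_sub_C Cc two_ne_zero, ?_⟩
    rw [Polynomial.eval₂_sub, Polynomial.eval₂_X_pow, Polynomial.eval₂_C, hz2, sub_self]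
  obtain ⟨y, hy⟩ := IsIntegrallyClosed.isIntegral_iff.mp hζint
  have hkey : y * B = A := by
    apply hAlgInj
    rw [map_mul, hy, hζ, div_mul_cancel₀ _ hBne]
  have hAsupp : c.mk' u₁ ∈ (y * B).coeff.support := by
    rw [hkey, hA]
    rw [AddMonoidAlgebra.coeff_single, Finsupp.mem_support_iff, Finsupp.single_eq_same]
    exact one_ne_zero
  have hsub := AddMonoidAlgebra.support_coeff_mul_subset y B hAsupp
  rw [Finset.mem_add] at hsub
  obtain ⟨s, hs, b, hb, heq'⟩ := hsub
  have hbjj : b = c.mk' (Finsupp.single j 1) := by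
    rw [hB, AddMonoidAlgebra.coeff_single] at hb; have := Finsupp.support_single_subset hb
    simpa using this
  obtain ⟨v, rfl⟩ := AddCon.mk'_surjective (c := c) s
  have hcrel : c (v + Finsupp.single j 1) u₁ := by
    apply (AddCon.eq c).mp
    have : c.mk' (v + Finsupp.single j 1) = c.mk' u₁ := by
      rw [map_add, ← hbjj, ← heq']
    exact this
  rw [hc, rcon_r] at hcrel
  obtain ⟨m, heq⟩ := hcrel
  have hcj : (v j : ℤ) + 1 + m * (w₂ j : ℤ) = 0 := by
    have h0 := fs_coord heq j
    simp only [hu₁, map_add, zc_tsub hle1, Finsupp.add_apply, Finsupp.sub_apply,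
      Finsupp.smul_apply, smul_eq_mul, zc_apply, zc_single, Finsupp.single_apply] at h0
    rw [if_neg hij] at h0
    norm_num at h0
    push_cast [hw1j] at h0
    linarith
  have hci : (v i : ℤ) = (w₁ i : ℤ) - 1 + m * (w₁ i : ℤ) := by
    have h0 := fs_coord heq i
    simp only [hu₁, map_add, zc_tsub hle1, Finsupp.add_apply, Finsupp.sub_apply,
      Finsupp.smul_apply, smul_eq_mul, zc_apply, zc_single, Finsupp.single_apply] at h0
    rw [if_neg (fun h => hij h.symm)] at h0
    norm_num at h0
    push_cast [hw2i] at h0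
    linarith
  have hm : m ≤ -1 := by
    by_contra hm'
    push_neg at hm'
    have h0 : (0:ℤ) ≤ m := by omega
    have h1 := mul_nonneg h0 (by positivity : (0:ℤ) ≤ (w₂ j : ℤ))
    have hvj : (0:ℤ) ≤ (v j : ℤ) := by positivity
    linarith
  have hmul : (m + 1) * (w₁ i : ℤ) ≤ 0 :=
    mul_nonpos_of_nonpos_of_nonneg (by omega) (by positivity)
  have hexpand : (m + 1) * (w₁ i : ℤ) = m * (w₁ i : ℤ) + (w₁ i : ℤ) := by ring
  have hvi : (0:ℤ) ≤ (v i : ℤ) := by positivity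
  have hwi : (2:ℤ) ≤ (w₁ i : ℤ) := by exact_mod_cast hi
  linarith

end Forward

noncomputable section BackMain

open Finsupp

theorem backward_main {n : ℕ} (K : Type*) [Field K] (w₁ w₂ : Fin n →₀ ℕ)
    (h01 : w₁ ≠ 0) (hd : ∀ i, w₁ i = 0 ∨ w₂ i = 0) (hsf : ∀ i, w₁ i ≤ 1)
    (c : AddCon (Fin n →₀ ℕ)) (hc : c = rcon w₁ w₂) :
    IsDomain (AddMonoidAlgebra K c.Quotient) ∧
      IsIntegrallyClosed (AddMonoidAlgebra K c.Quotient) := by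
  classical
  obtain ⟨i₀, hi₀⟩ : ∃ i₀, w₁ i₀ = 1 := by
    obtain ⟨i, hi⟩ := Finsupp.support_nonempty_iff.mpr h01
    have := Finsupp.mem_support_iff.mp hi
    have := hsf i
    exact ⟨i, by omega⟩
  set L := FractionRing (AddMonoidAlgebra K (Zp n i₀)) with hL
  -- the injection iota
  have hker : c ≤ AddCon.ker (phi w₁ w₂ i₀) := by
    intro u v h
    exact (phi_eq_iff hi₀ hd u v).mpr (by rw [hc] at h; exact h)
  set iota : c.Quotient →+ Zp n i₀ := c.lift (phi w₁ w₂ i₀) hker with hiota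
  have iota_mk : ∀ u, iota (c.mk' u) = phi w₁ w₂ i₀ u := fun u => AddCon.lift_coe hker u
  have iota_inj : Function.Injective iota := by
    intro a b
    refine AddCon.induction_on₂ a b ?_
    intro u v h
    rw [show (↑u : c.Quotient) = c.mk' u from rfl, show (↑v : c.Quotient) = c.mk' v from rfl,
      iota_mk, iota_mk] at h
    have hr := (phi_eq_iff hi₀ hd u v).mp h
    exact (AddCon.eq c).mpr (by rw [hc]; exact hr)
  set ψ : AddMonoidAlgebra K c.Quotient →+* AddMonoidAlgebra K (Zp n i₀) :=
    AddMonoidAlgebra.mapDomainRingHom K iota with hψ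
  have hψcoe : ∀ y, ψ y = AddMonoidAlgebra.mapDomain iota y := fun _ => rfl
  have ψinj : Function.Injective ψ := AddMonoidAlgebra.mapDomain_injective iota_inj
  obtain ⟨hdomz, hiccz⟩ := laurent_integrallyClosed K (Fm n i₀)
  haveI := hdomz
  haveI := hiccz
  haveI hdomR : IsDomain (AddMonoidAlgebra K c.Quotient) := Function.Injective.isDomain ψ ψinj
  refine ⟨hdomR, ?_⟩
  -- support characterizations
  have hψsupp : ∀ (y : AddMonoidAlgebra K c.Quotient), ∀ z ∈ (ψ y).coeff.support,
      Tcond w₁ w₂ i₀ z := by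
    intro y z hz
    rw [hψcoe] at hz; change z ∈ (Finsupp.mapDomain iota y.coeff).support at hz; rw [Finsupp.mapDomain_support_of_injective iota_inj] at hz
    rw [Finset.mem_image] at hz
    obtain ⟨s, hs, rfl⟩ := hz
    obtain ⟨u, rfl⟩ := AddCon.mk'_surjective s
    rw [iota_mk]
    exact phi_Tcond hd hsf u
  have hrangeψ : ∀ f : AddMonoidAlgebra K (Zp n i₀),
      (∀ z ∈ f.coeff.support, Tcond w₁ w₂ i₀ z) → ∃ y, ψ y = f := by
    intro f hf
    obtain ⟨y, hy⟩ := mapDomain_mem_range iota f.coeff (fun z hz => by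
      obtain ⟨u, hu⟩ := Tcond_mem hd hsf z (hf z hz)
      exact ⟨c.mk' u, by rw [iota_mk, hu]⟩)
    exact ⟨AddMonoidAlgebra.ofCoeff y, by rw [hψcoe]; exact congrArg AddMonoidAlgebra.ofCoeff hy⟩
  -- density
  have dense : ∀ f : AddMonoidAlgebra K (Zp n i₀), ∃ a s, ψ s * f = ψ a ∧ s ≠ 0 := by
    intro f
    set M := suppBound f with hM
    have htc : Tcond w₁ w₂ i₀ (zn (constN M)) :=
      Tcond_of_nonneg _ _ _ _ (fun j => by rw [zn_constN]; positivity)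
    obtain ⟨u_t, hu_t⟩ := Tcond_mem hd hsf _ htc
    have hψs : ψ (AddMonoidAlgebra.single (c.mk' u_t) (1:K)) =
        AddMonoidAlgebra.single (zn (constN M)) (1:K) := by
      rw [hψcoe, AddMonoidAlgebra.mapDomain_single, iota_mk, hu_t]
    have hsupp : ∀ z' ∈ (AddMonoidAlgebra.single (zn (constN M)) (1:K) * f).coeff.support,
        Tcond w₁ w₂ i₀ z' := by
      intro z' hz'
      have h1 := AddMonoidAlgebra.support_coeff_mul_subset
        (AddMonoidAlgebra.single (zn (constN M)) (1:K)) f hz'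
      rw [Finset.mem_add] at h1
      obtain ⟨a, ha, b, hb, rfl⟩ := h1
      have ha' : a = zn (constN M) := by rw [AddMonoidAlgebra.coeff_single] at ha; simpa using Finsupp.support_single_subset ha
      apply Tcond_of_nonneg
      intro j
      rw [ha', Finsupp.add_apply, zn_constN]
      have := suppBound_spec f hb j
      omega
    obtain ⟨a, ha⟩ := hrangeψ _ hsupp
    refine ⟨a, AddMonoidAlgebra.single (c.mk' u_t) (1:K), ?_,
      fun h => one_ne_zero (α := K) (AddMonoidAlgebra.single_eq_zero.mp h)⟩
    rw [hψs, ha]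
  letI algR : Algebra (AddMonoidAlgebra K c.Quotient) L :=
    ((algebraMap (AddMonoidAlgebra K (Zp n i₀)) L).comp ψ).toAlgebra
  haveI frR : IsFractionRing (AddMonoidAlgebra K c.Quotient) L :=
    isFractionRing_of_dense ψ ψinj dense
  rw [isIntegrallyClosed_iff L]
  intro x hx
  obtain ⟨p, pm, hp⟩ := hx
  set p' := p.map ψ with hp'def
  have pm' : p'.Monic := pm.map ψ
  have heval0 : Polynomial.eval₂ (algebraMap (AddMonoidAlgebra K (Zp n i₀)) L) x p' = 0 := by
    have hcomp : (algebraMap (AddMonoidAlgebra K (Zp n i₀)) L).comp ψ =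
        algebraMap (AddMonoidAlgebra K c.Quotient) L := rfl
    rw [hp'def, Polynomial.eval₂_map, hcomp]
    exact hp
  have hx2 : IsIntegral (AddMonoidAlgebra K (Zp n i₀)) x := ⟨p', pm', heval0⟩
  obtain ⟨y, hy⟩ := IsIntegrallyClosed.isIntegral_iff.mp hx2
  have heval : p'.eval y = 0 := by
    have h1 : algebraMap (AddMonoidAlgebra K (Zp n i₀)) L (p'.eval y) = 0 := by
      rw [← Polynomial.eval₂_at_apply, hy]
      exact heval0
    apply IsFractionRing.injective (AddMonoidAlgebra K (Zp n i₀)) L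
    rw [h1, map_zero]
  have hcoeffT : ∀ i, ∀ z ∈ (p'.coeff i).coeff.support, Tcond w₁ w₂ i₀ z := by
    intro i z hz
    rw [hp'def, Polynomial.coeff_map] at hz
    exact hψsupp _ z hz
  have hyT : ∀ z ∈ y.coeff.support, Tcond w₁ w₂ i₀ z := by
    intro z hz
    constructor
    · intro j hj
      have := support_nonneg_of_root (Finsupp.applyAddHom j) y p' pm' heval
        (fun i z' hz' => (hcoeffT i z' hz').1 j hj) z hz
      simpa using this
    · intro a b ha hb
      set lam : Zp n i₀ →+ ℤ :=
        Finsupp.applyAddHom b + (w₂ b.1 : ℤ) • Finsupp.applyAddHom a with hlamdef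
      have hlam : ∀ v : Zp n i₀, lam v = v b + (w₂ b.1 : ℤ) * v a := by
        intro v
        simp [hlamdef, Finsupp.applyAddHom]
      have := support_nonneg_of_root lam y p' pm' heval
        (fun i z' hz' => by rw [hlam]; exact (hcoeffT i z' hz').2 a b ha hb) z hz
      rw [hlam] at this
      exact this
  obtain ⟨y', hy'⟩ := hrangeψ y hyT
  refine ⟨y', ?_⟩
  have : algebraMap (AddMonoidAlgebra K c.Quotient) L y' =
      algebraMap (AddMonoidAlgebra K (Zp n i₀)) L (ψ y') := rfl
  rw [this, hy', hy]

end BackMain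

theorem stmt3 (K : Type*) [Field K] (n k : ℕ) (hk : 0 < k) (hkn : k < n)
    (w₁ w₂ : Fin n →₀ ℕ) (hw₁0 : w₁ ≠ 0) (hw₂0 : w₂ ≠ 0)
    (hw₁ : ∀ i, i ∈ supp w₁ → i.val < k) (hw₂ : ∀ i, i ∈ supp w₂ → k ≤ i.val)
    (c : AddCon (Fin n →₀ ℕ))
    (hc : c = addConGen (fun x y => x = w₁ ∧ y = w₂)) :
    (IsDomain (AddMonoidAlgebra K c.Quotient) ∧
        IsIntegrallyClosed (AddMonoidAlgebra K c.Quotient)) ↔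
      (Hsupp w₁ = ∅ ∨ Hsupp w₂ = ∅) := by
  have hdisj : ∀ i, w₁ i = 0 ∨ w₂ i = 0 := by
    intro i
    by_contra hcon
    push_neg at hcon
    have h1 := hw₁ i (show w₁ i ≠ 0 from hcon.1)
    have h2 := hw₂ i (show w₂ i ≠ 0 from hcon.2)
    omega
  have hcr : c = rcon w₁ w₂ := by rw [hc, conGen_eq_rcon w₁ w₂ hdisj]
  constructor
  · rintro ⟨hdom, hic⟩
    by_contra hcon
    push_neg at hcon
    obtain ⟨h1, h2⟩ := hcon
    obtain ⟨i, hi⟩ := h1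
    obtain ⟨j, hj⟩ := h2
    haveI := hdom
    exact forward_false K w₁ w₂ hdisj (show 2 ≤ w₁ i from hi) (show 2 ≤ w₂ j from hj) c hcr hic
  · intro h
    rcases h with h | h
    · have hsf : ∀ i, w₁ i ≤ 1 := by
        intro i
        by_contra hcon
        exact Set.eq_empty_iff_forall_notMem.mp h i (show 2 ≤ w₁ i by omega)
      exact backward_main K w₁ w₂ hw₁0 hdisj hsf c hcr
    · have hsf : ∀ i, w₂ i ≤ 1 := by
        intro i
        by_contra hcon
        exact Set.eq_empty_iff_forall_notMem.mp h i (show 2 ≤ w₂ i by omega)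
      have hcr2 : c = rcon w₂ w₁ := by rw [hcr, rcon_comm]
      have hdisj2 : ∀ i, w₂ i = 0 ∨ w₁ i = 0 := fun i => (hdisj i).symm
      exact backward_main K w₂ w₁ hw₂0 hdisj2 hsf c hcr2
end

section
/- Let K be a field, let 0 < k < n, and let a_{k+1}, …, a_n be integers ≥ 1. Let S be the presented commutative monoid ⟨u₁,…,uₙ | u₁⋯u_k = u_{k+1}^{a_{k+1}}⋯u_n^{a_n}⟩, the quotient of (Fin n →₀ ℕ) by the additive congruence generated by the pair (e₁ + ⋯ + e_k, a_{k+1}·e_{k+1} + ⋯ + a_n·e_n), with quotient map π, and let R = AddMonoidAlgebra K S (this is a normal domain). For y ∈ {1,…,k} and z ∈ {k+1,…,n}, let P_{y,z} be the ideal of R generated by the two monomials X^{π(e_y)} and X^{π(e_z)}. Then P_{y,z} is a prime ideal of R of height 1. -/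
namespace Stmt4Aux
variable {n k : ℕ} {a : Fin n → ℕ} {c : AddCon (Fin n →₀ ℕ)}

lemma wordOne_apply (i : Fin n) : wordOne n k i = if i.val < k then 1 else 0 := by
  simp [wordOne]
lemma wordTwo_apply (i : Fin n) : wordTwo n k a i = if k ≤ i.val then a i else 0 := by
  simp [wordTwo]

lemma c_base (hc : c = addConGen (fun x y => x = wordOne n k ∧ y = wordTwo n k a)) :
    c (wordOne n k) (wordTwo n k a) := by
  subst hc
  exact AddConGen.Rel.of _ _ ⟨rfl, rfl⟩

lemma relC (hc : c = addConGen (fun x y => x = wordOne n k ∧ y = wordTwo n k a)) :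
    ∀ (m : ℕ) (v v' : Fin n →₀ ℕ),
      v + m • wordTwo n k a = v' + m • wordOne n k → c v v' := by
  intro m
  induction m with
  | zero =>
    intro v v' h
    simp only [zero_smul, add_zero] at h
    exact h ▸ c.refl v
  | succ m ih =>
    intro v v' h
    have hle : wordTwo n k a ≤ v' := by
      intro i
      have hi := DFunLike.congr_fun h i
      simp only [Finsupp.coe_add, Finsupp.coe_smul, Pi.add_apply, Pi.smul_apply,
        smul_eq_mul] at hi
      rw [wordTwo_apply]
      by_cases hik : k ≤ i.val
      · have h1 : wordOne n k i = 0 := by rw [wordOne_apply]; simp; omega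
        rw [h1, mul_zero, add_zero] at hi
        rw [wordTwo_apply] at hi
        simp [hik] at hi ⊢
        have : a i ≤ (m + 1) * a i := Nat.le_mul_of_pos_left (a i) (Nat.succ_pos m)
        omega
      · simp [hik]
    set v'' := (v' - wordTwo n k a) + wordOne n k with hv''
    have h1 : v'' + wordTwo n k a = v' + wordOne n k := by
      rw [hv'', add_right_comm, tsub_add_cancel_of_le hle]
    have hc1 : c v' v'' := by
      have : c ((v' - wordTwo n k a) + wordOne n k) ((v' - wordTwo n k a) + wordTwo n k a) :=
        c.add (c.refl _) (c_base hc)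
      rw [tsub_add_cancel_of_le hle] at this
      exact (c.symm this)
    have h2 : v + m • wordTwo n k a = v'' + m • wordOne n k := by
      have : v + m • wordTwo n k a + wordTwo n k a = v'' + m • wordOne n k + wordTwo n k a := by
        calc v + m • wordTwo n k a + wordTwo n k a
            = v + (m + 1) • wordTwo n k a := by rw [add_assoc, succ_nsmul]
          _ = v' + (m + 1) • wordOne n k := h
          _ = (v' + wordOne n k) + m • wordOne n k := by
              rw [add_assoc, succ_nsmul, add_comm (m • wordOne n k)]
          _ = (v'' + wordTwo n k a) + m • wordOne n k := by rw [h1]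
          _ = v'' + m • wordOne n k + wordTwo n k a := by rw [add_right_comm]
      exact add_right_cancel this
    exact c.trans (ih v v'' h2) (c.symm hc1)

/-- the grading hom `v ↦ a z * v y + v z`. -/
def hAdd (a : Fin n → ℕ) (y z : Fin n) : (Fin n →₀ ℕ) →+ ℕ where
  toFun v := a z * v y + v z
  map_zero' := by simp
  map_add' v w := by
    simp only [Finsupp.add_apply, Nat.mul_add]
    ring

lemma hAdd_compat (hy : y.val < k) (hz : k ≤ z.val)
    (hc : c = addConGen (fun x y => x = wordOne n k ∧ y = wordTwo n k a)) :
    c ≤ AddCon.ker (hAdd a y z) := by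
  rw [hc]
  apply AddCon.addConGen_le.mpr
  rintro x x' ⟨rfl, rfl⟩
  rw [AddCon.ker_rel]
  show a z * wordOne n k y + wordOne n k z = a z * wordTwo n k a y + wordTwo n k a z
  rw [wordOne_apply, wordOne_apply, wordTwo_apply, wordTwo_apply]
  have hyz : ¬ (k ≤ y.val) := by omega
  have hzk : ¬ (z.val < k) := by omega
  simp [hy, hz, hyz, hzk]

/-- the integer embedding data -/
noncomputable def dInt (n k : ℕ) (a : Fin n → ℕ) : Fin n → ℤ :=
  fun i => (wordOne n k i : ℤ) - (wordTwo n k a i : ℤ)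

noncomputable def phi0 (n k : ℕ) (a : Fin n → ℕ) (i0 : Fin n) :
    (Fin n →₀ ℕ) →+ (Fin n → ℤ) where
  toFun v := fun i => (v i : ℤ) - dInt n k a i * (v i0 : ℤ)
  map_zero' := by funext i; simp
  map_add' v w := by
    funext i
    simp only [Finsupp.add_apply, Pi.add_apply]
    push_cast
    ring

lemma phi0_compat (hk : 0 < k) (hi0 : (i0 : Fin n).val = 0)
    (hc : c = addConGen (fun x y => x = wordOne n k ∧ y = wordTwo n k a)) :
    c ≤ AddCon.ker (phi0 n k a i0) := by
  rw [hc]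
  apply AddCon.addConGen_le.mpr
  rintro x x' ⟨rfl, rfl⟩
  rw [AddCon.ker_rel]
  funext i
  show (wordOne n k i : ℤ) - dInt n k a i * (wordOne n k i0 : ℤ)
      = (wordTwo n k a i : ℤ) - dInt n k a i * (wordTwo n k a i0 : ℤ)
  have h1 : wordOne n k i0 = 1 := by rw [wordOne_apply]; simp [hi0, hk]
  have h2 : wordTwo n k a i0 = 0 := by rw [wordTwo_apply]; simp [hi0]; omega
  rw [h1, h2, dInt]
  push_cast
  ring

lemma phi0_inj (hk : 0 < k) (hi0 : (i0 : Fin n).val = 0)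
    (hc : c = addConGen (fun x y => x = wordOne n k ∧ y = wordTwo n k a))
    (v v' : Fin n →₀ ℕ) (h : phi0 n k a i0 v = phi0 n k a i0 v') : c v v' := by
  have key : ∀ i : Fin n, (v i : ℤ) - (v' i : ℤ)
      = dInt n k a i * ((v i0 : ℤ) - (v' i0 : ℤ)) := by
    intro i
    have hi : ((v i : ℤ) - dInt n k a i * (v i0 : ℤ))
        = ((v' i : ℤ) - dInt n k a i * (v' i0 : ℤ)) := congrFun h i
    linarith
  set mz : ℤ := (v i0 : ℤ) - (v' i0 : ℤ) with hmz
  rcases le_or_gt 0 mz with hm | hm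
  · apply relC hc mz.toNat v v'
    ext i
    have hki' : (v i : ℤ) - (v' i : ℤ)
        = ((wordOne n k i : ℤ) - (wordTwo n k a i : ℤ)) * mz := key i
    have hmzc : mz = (mz.toNat : ℤ) := by omega
    rw [hmzc] at hki'
    simp only [Finsupp.add_apply, Finsupp.smul_apply, smul_eq_mul]
    zify
    linear_combination hki'
  · apply c.symm
    apply relC hc (-mz).toNat v' v
    ext i
    have hki' : (v i : ℤ) - (v' i : ℤ)
        = ((wordOne n k i : ℤ) - (wordTwo n k a i : ℤ)) * mz := key i
    have hmzc : mz = -(((-mz).toNat : ℤ)) := by omega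
    rw [hmzc] at hki'
    simp only [Finsupp.add_apply, Finsupp.smul_apply, smul_eq_mul]
    zify
    linear_combination -hki'

noncomputable def W1 (n k : ℕ) (y : Fin n) : Fin n →₀ ℕ :=
  Finsupp.equivFunOnFinite.symm fun i => if i.val < k ∧ i ≠ y then 1 else 0

noncomputable def W2 (n k : ℕ) (a : Fin n → ℕ) (z : Fin n) : Fin n →₀ ℕ :=
  Finsupp.equivFunOnFinite.symm fun i => if k ≤ i.val ∧ i ≠ z then a i else 0

noncomputable def core {n : ℕ} (y z : Fin n) (v : Fin n →₀ ℕ) : Fin n →₀ ℕ :=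
  Finsupp.equivFunOnFinite.symm fun i => if i = y ∨ i = z then 0 else v i

lemma W1_apply {y : Fin n} (i : Fin n) :
    W1 n k y i = if i.val < k ∧ i ≠ y then 1 else 0 := by simp [W1]

lemma W2_apply {z : Fin n} (i : Fin n) :
    W2 n k a z i = if k ≤ i.val ∧ i ≠ z then a i else 0 := by simp [W2]

lemma core_apply {y z : Fin n} (v : Fin n →₀ ℕ) (i : Fin n) :
    core y z v i = if i = y ∨ i = z then 0 else v i := by simp [core]

lemma w1_split {y : Fin n} (hy : y.val < k) :
    wordOne n k = Finsupp.single y 1 + W1 n k y := by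
  ext i
  rw [Finsupp.add_apply, wordOne_apply, W1_apply, Finsupp.single_apply]
  by_cases h : i = y
  · subst h; simp [hy]
  · simp [h, Ne.symm h]

lemma w2_split {z : Fin n} (hz : k ≤ z.val) :
    wordTwo n k a = Finsupp.single z (a z) + W2 n k a z := by
  ext i
  rw [Finsupp.add_apply, wordTwo_apply, W2_apply, Finsupp.single_apply]
  by_cases h2 : i = z
  · subst h2; simp [hz]
  · simp [h2, Ne.symm h2]

lemma key_rel {y z : Fin n} (hy : y.val < k) (hz : k ≤ z.val)
    (hc : c = addConGen (fun x y => x = wordOne n k ∧ y = wordTwo n k a))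
    (v : Fin n →₀ ℕ) (N : ℕ) (hN : v y ≤ N) :
    c (v + N • W1 n k y)
      ((a z * v y + v z) • Finsupp.single z 1 +
        (core y z v + (v y) • W2 n k a z + (N - v y) • W1 n k y)) := by
  apply relC hc (v y)
  ext i
  have hyz : y ≠ z := fun h => by rw [h] at hy; omega
  simp only [Finsupp.add_apply, Finsupp.smul_apply, smul_eq_mul, wordOne_apply,
    wordTwo_apply, W1_apply, W2_apply, core_apply v, Finsupp.single_apply]
  by_cases hiy : i = y
  · subst hiy
    have h1 : ¬ (k ≤ i.val) := by omega
    simp [hy, h1, Ne.symm hyz, hyz]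
  · by_cases hiz : i = z
    · subst hiz
      have h1 : ¬ (i.val < k) := by omega
      simp [h1, hz, hiy]
      ring
    · have hzi : ¬ (z = i) := fun h => hiz h.symm
      by_cases hik : i.val < k
      · have h2 : ¬ (k ≤ i.val) := by omega
        simp [hik, h2, hiy, hiz, hzi]
        omega
      · have h2 : k ≤ i.val := by omega
        simp [hik, h2, hiy, hiz, hzi]
        try ring

section QHom

variable (K : Type*) [Field K] {S : Type*} [AddCommMonoid S]

/-- monomial truncation monoid hom -/
noncomputable def qF (hb : S →+ ℕ) : Multiplicative S →* AddMonoidAlgebra K S where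
  toFun s := if hb s.toAdd = 0 then AddMonoidAlgebra.single s.toAdd 1 else 0
  map_one' := by
    simp only [toAdd_one, map_zero, if_pos rfl]
    rfl
  map_mul' s t := by
    simp only [toAdd_mul, map_add]
    by_cases hs : hb s.toAdd = 0 <;> by_cases ht : hb t.toAdd = 0
    · rw [if_pos (by rw [hs, ht]), if_pos hs, if_pos ht,
        AddMonoidAlgebra.single_mul_single, mul_one]
    · rw [if_neg (by omega), if_neg ht, mul_zero]
    · rw [if_neg (by omega), if_neg hs, zero_mul]
    · rw [if_neg (by omega), if_neg hs, zero_mul]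

noncomputable def qHom (hb : S →+ ℕ) :
    AddMonoidAlgebra K S →ₐ[K] AddMonoidAlgebra K S :=
  AddMonoidAlgebra.lift K _ S (qF K hb)

lemma qHom_single (hb : S →+ ℕ) (s : S) (b : K) :
    qHom K hb (AddMonoidAlgebra.single s b) = if hb s = 0 then AddMonoidAlgebra.single s b else 0 := by
  rw [qHom, AddMonoidAlgebra.lift_single]
  show b • (if hb s = 0 then AddMonoidAlgebra.single s 1 else (0 : AddMonoidAlgebra K S)) = _
  by_cases hs : hb s = 0
  · rw [if_pos hs, if_pos hs, AddMonoidAlgebra.smul_single, smul_eq_mul, mul_one]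
  · rw [if_neg hs, if_neg hs, smul_zero]

lemma qHom_coeff (hb : S →+ ℕ) (x : AddMonoidAlgebra K S) (s : S) (hs : hb s = 0) :
    (qHom K hb x).coeff s = x.coeff s := by
  conv_lhs => rw [← AddMonoidAlgebra.sum_coeff_single x]
  rw [map_finsuppSum, Finsupp.sum, AddMonoidAlgebra.coeff_sum, Finsupp.finset_sum_apply]
  rw [Finset.sum_eq_single s]
  · rw [qHom_single, if_pos hs, AddMonoidAlgebra.coeff_single, Finsupp.single_eq_same]
  · intro u hu hus
    rw [qHom_single]
    by_cases h0 : hb u = 0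
    · rw [if_pos h0, AddMonoidAlgebra.coeff_single, Finsupp.single_eq_of_ne' hus]
    · rw [if_neg h0, AddMonoidAlgebra.coeff_zero, Finsupp.coe_zero, Pi.zero_apply]
  · intro hsx
    rw [Finsupp.notMem_support_iff.mp hsx, AddMonoidAlgebra.single_zero, map_zero,
      AddMonoidAlgebra.coeff_zero, Finsupp.coe_zero, Pi.zero_apply]

lemma mul_of'_eq (x : AddMonoidAlgebra K S) (u : S) :
    x * AddMonoidAlgebra.of' K S u = AddMonoidAlgebra.mapDomain (· + u) x := by
  induction x using AddMonoidAlgebra.induction_linear with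
  | zero => simp
  | add f g hf hg => rw [add_mul, hf, hg, AddMonoidAlgebra.mapDomain_add]
  | single s b =>
    rw [AddMonoidAlgebra.of'_apply, AddMonoidAlgebra.single_mul_single, mul_one,
      AddMonoidAlgebra.mapDomain_single]

lemma of'_mul_eq (u : S) (x : AddMonoidAlgebra K S) :
    AddMonoidAlgebra.of' K S u * x = AddMonoidAlgebra.mapDomain (u + ·) x := by
  induction x using AddMonoidAlgebra.induction_linear with
  | zero => simp
  | add f g hf hg => rw [mul_add, hf, hg, AddMonoidAlgebra.mapDomain_add]
  | single s b =>
    rw [AddMonoidAlgebra.of'_apply, AddMonoidAlgebra.single_mul_single, one_mul,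
      AddMonoidAlgebra.mapDomain_single]

lemma of'_pow (u : S) (mm : ℕ) :
    (AddMonoidAlgebra.of' K S u) ^ mm = AddMonoidAlgebra.of' K S (mm • u) := by
  rw [AddMonoidAlgebra.of'_apply, AddMonoidAlgebra.of'_apply,
    AddMonoidAlgebra.single_pow, one_pow]

end QHom

end Stmt4Aux


open Stmt4Aux AddMonoidAlgebra Finsupp

theorem stmt4 (K : Type*) [Field K] (n k : ℕ) (hk : 0 < k) (hkn : k < n)
    (a : Fin n → ℕ) (ha : ∀ i : Fin n, k ≤ i.val → 1 ≤ a i)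
    (c : AddCon (Fin n →₀ ℕ))
    (hc : c = addConGen (fun x y => x = wordOne n k ∧ y = wordTwo n k a))
    (y z : Fin n) (hy : y.val < k) (hz : k ≤ z.val)
    (P : Ideal (AddMonoidAlgebra K c.Quotient))
    (hP : P = Ideal.span
      {AddMonoidAlgebra.of' K c.Quotient (c.mk' (Finsupp.single y 1)),
       AddMonoidAlgebra.of' K c.Quotient (c.mk' (Finsupp.single z 1))}) :
    P.IsPrime ∧
      Set.chainHeight {Q : Ideal (AddMonoidAlgebra K c.Quotient) | Q.IsPrime ∧ Q < P} = 1 := by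
  classical
  have hyz : y ≠ z := fun h => by rw [h] at hy; omega
  have h0n : 0 < n := hk.trans hkn
  -- the grading homomorphism on the quotient
  set hb : c.Quotient →+ ℕ := c.lift (hAdd a y z) (hAdd_compat hy hz hc) with hbdef
  have hb_mk : ∀ v : Fin n →₀ ℕ, hb (c.mk' v) = a z * v y + v z := fun v =>
    AddCon.lift_coe _ v
  -- the embedding into a group
  set ph : c.Quotient →+ (Fin n → ℤ) :=
    c.lift (phi0 n k a ⟨0, h0n⟩) (phi0_compat hk rfl hc) with phdef
  have ph_inj : Function.Injective ph := by
    intro p q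
    refine AddCon.induction_on₂ p q (fun v v' h => ?_)
    exact (AddCon.eq c).mpr (phi0_inj hk rfl hc v v' h)
  have cancel : ∀ p q u : c.Quotient, p + u = q + u → p = q := by
    intro p q u h
    apply ph_inj
    have h2 := congrArg ph h
    rw [map_add, map_add] at h2
    exact add_right_cancel h2
  have mkeq : ∀ v v' : Fin n →₀ ℕ, c v v' → c.mk' v = c.mk' v' := fun v v' h =>
    (AddCon.eq c).mpr h
  haveI : NoZeroDivisors (AddMonoidAlgebra K c.Quotient) := by
    constructor
    intro x₁ x₂ h
    have hinj : Function.Injective (AddMonoidAlgebra.mapDomainRingHom K ph) :=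
      AddMonoidAlgebra.mapDomain_injective ph_inj
    have h2 := congrArg (AddMonoidAlgebra.mapDomainRingHom K ph) h
    rw [map_mul, map_zero] at h2
    rcases mul_eq_zero.mp h2 with h3 | h3
    · left; apply hinj; rw [h3, map_zero]
    · right; apply hinj; rw [h3, map_zero]
  -- membership in P
  have hPspan : P = Ideal.span (AddMonoidAlgebra.of' K c.Quotient ''
      {c.mk' (Finsupp.single y 1), c.mk' (Finsupp.single z 1)}) := by
    rw [hP, Set.image_insert_eq, Set.image_singleton]
  have hb_ey : hb (c.mk' (Finsupp.single y 1)) = a z := by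
    rw [hb_mk]
    rw [Finsupp.single_apply, Finsupp.single_apply, if_pos rfl, if_neg hyz]
    omega
  have hb_ez : hb (c.mk' (Finsupp.single z 1)) = 1 := by
    rw [hb_mk]
    rw [Finsupp.single_apply, Finsupp.single_apply, if_pos rfl, if_neg (Ne.symm hyz)]
    ring
  have memP : ∀ x : AddMonoidAlgebra K c.Quotient,
      x ∈ P ↔ ∀ s ∈ x.coeff.support, hb s ≠ 0 := by
    intro x
    rw [hPspan, AddMonoidAlgebra.mem_ideal_span_of'_image]
    constructor
    · intro h s hs
      obtain ⟨s', hs', d, rfl⟩ := h s hs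
      rcases hs' with rfl | rfl
      · rw [map_add, hb_ey]
        have := ha z hz
        omega
      · rw [map_add, hb_ez]
        omega
    · intro h s hs
      obtain ⟨v, rfl⟩ := AddCon.mk'_surjective s
      have hbv := h _ hs
      rw [hb_mk] at hbv
      rcases Nat.eq_zero_or_pos (v y) with hvy | hvy
      · have hvz : 0 < v z := by
          rcases Nat.eq_zero_or_pos (v z) with h0 | h0
          · exfalso; apply hbv; rw [hvy, h0, mul_zero, add_zero]
          · exact h0
        refine ⟨c.mk' (Finsupp.single z 1), Or.inr rfl, c.mk' (v - Finsupp.single z 1), ?_⟩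
        rw [← map_add]
        congr 1
        rw [tsub_add_cancel_of_le (Finsupp.single_le_iff.mpr hvz)]
      · refine ⟨c.mk' (Finsupp.single y 1), Or.inl rfl, c.mk' (v - Finsupp.single y 1), ?_⟩
        rw [← map_add]
        congr 1
        rw [tsub_add_cancel_of_le (Finsupp.single_le_iff.mpr hvy)]
  -- further hb values
  have hb_W1 : hb (c.mk' (W1 n k y)) = 0 := by
    rw [hb_mk, W1_apply, W1_apply]
    have h1 : ¬ (z.val < k) := by omega
    simp [h1]
  have hb_W2 : hb (c.mk' (W2 n k a z)) = 0 := by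
    rw [hb_mk, W2_apply, W2_apply]
    have h1 : ¬ (k ≤ y.val) := by omega
    simp [h1]
  -- primality
  have qgen1 : qHom K hb (AddMonoidAlgebra.of' K c.Quotient (c.mk' (Finsupp.single y 1))) = 0 := by
    rw [AddMonoidAlgebra.of'_apply, qHom_single, if_neg]
    rw [hb_ey]
    have := ha z hz; omega
  have qgen2 : qHom K hb (AddMonoidAlgebra.of' K c.Quotient (c.mk' (Finsupp.single z 1))) = 0 := by
    rw [AddMonoidAlgebra.of'_apply, qHom_single, if_neg]
    rw [hb_ez]
    omega
  have hPker : P = RingHom.ker (qHom K hb).toRingHom := by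
    apply le_antisymm
    · rw [hP]
      apply Ideal.span_le.mpr
      rintro x (rfl | rfl)
      · rw [SetLike.mem_coe, RingHom.mem_ker]; exact qgen1
      · rw [SetLike.mem_coe, RingHom.mem_ker]; exact qgen2
    · intro x hx
      rw [RingHom.mem_ker] at hx
      rw [memP]
      intro s hs
      intro h0
      have h1 := qHom_coeff K hb x s h0
      rw [show (qHom K hb).toRingHom x = qHom K hb x from rfl] at hx
      rw [hx] at h1
      exact Finsupp.mem_support_iff.mp hs h1.symm
  have prime : P.IsPrime := by
    rw [hPker]
    constructor
    · rw [Ideal.ne_top_iff_one, RingHom.mem_ker]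
      intro h1
      rw [map_one] at h1
      exact one_ne_zero h1
    · intro x₁ x₂ h
      rw [RingHom.mem_ker, map_mul] at h
      rcases mul_eq_zero.mp h with h1 | h1
      · left; rw [RingHom.mem_ker]; exact h1
      · right; rw [RingHom.mem_ker]; exact h1
  -- key product relation lemmas at quotient level
  have rel_w : c.mk' (wordOne n k) = c.mk' (wordTwo n k a) := mkeq _ _ (c_base hc)
  have split1 : c.mk' (wordOne n k) = c.mk' (Finsupp.single y 1) + c.mk' (W1 n k y) := by
    rw [← map_add]; congr 1; exact w1_split hy
  have split2 : c.mk' (wordTwo n k a) =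
      (a z) • c.mk' (Finsupp.single z 1) + c.mk' (W2 n k a z) := by
    rw [← map_nsmul, ← map_add]
    congr 1
    rw [w2_split hz]
    congr 1
    rw [Finsupp.smul_single, smul_eq_mul, mul_one]
  -- the main claim: all primes strictly below P are ⊥
  have main : ∀ Q : Ideal (AddMonoidAlgebra K c.Quotient), Q.IsPrime → Q < P → Q = ⊥ := by
    intro Q hQ hQP
    have hQle : Q ≤ P := le_of_lt hQP
    have mono0 : ∀ s : c.Quotient, hb s = 0 → AddMonoidAlgebra.of' K c.Quotient s ∉ Q := by
      intro s h0 hmem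
      have h1 := (memP _).mp (hQle hmem) s
      rw [AddMonoidAlgebra.of'_apply] at h1
      exact h1 (by rw [AddMonoidAlgebra.coeff_single, Finsupp.support_single_ne_zero s one_ne_zero]; exact Finset.mem_singleton_self s) h0
    have PleQ : AddMonoidAlgebra.of' K c.Quotient (c.mk' (Finsupp.single y 1)) ∈ Q →
        AddMonoidAlgebra.of' K c.Quotient (c.mk' (Finsupp.single z 1)) ∈ Q → False := by
      intro h1 h2
      have : P ≤ Q := by
        rw [hP]
        apply Ideal.span_le.mpr
        rintro x (rfl | rfl)
        · exact h1
        · exact h2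
      exact absurd (lt_of_lt_of_le hQP this) (lt_irrefl _)
    have prod1 : AddMonoidAlgebra.of' K c.Quotient (c.mk' (Finsupp.single y 1)) *
        AddMonoidAlgebra.of' K c.Quotient (c.mk' (W1 n k y)) =
        (AddMonoidAlgebra.of' K c.Quotient (c.mk' (Finsupp.single z 1))) ^ (a z) *
        AddMonoidAlgebra.of' K c.Quotient (c.mk' (W2 n k a z)) := by
      rw [of'_pow, AddMonoidAlgebra.of'_apply, AddMonoidAlgebra.of'_apply,
        AddMonoidAlgebra.of'_apply, AddMonoidAlgebra.of'_apply,
        AddMonoidAlgebra.single_mul_single, AddMonoidAlgebra.single_mul_single, mul_one]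
      congr 1
      rw [← split1, ← split2, rel_w]
    have tQ : AddMonoidAlgebra.of' K c.Quotient (c.mk' (Finsupp.single z 1)) ∉ Q := by
      intro ht
      have h2 : (AddMonoidAlgebra.of' K c.Quotient (c.mk' (Finsupp.single z 1))) ^ (a z) *
          AddMonoidAlgebra.of' K c.Quotient (c.mk' (W2 n k a z)) ∈ Q :=
        Ideal.mul_mem_right _ _ (Q.pow_mem_of_mem ht (a z) (ha z hz))
      rw [← prod1] at h2
      rcases hQ.mem_or_mem h2 with h3 | h3
      · exact PleQ h3 ht
      · exact mono0 _ hb_W1 h3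
    have hzero : ∀ x ∈ Q, x = 0 := by
      intro x hxQ
      by_contra hx0
      have hsupp : x.coeff.support.Nonempty :=
          Finsupp.support_nonempty_iff.mpr (mt AddMonoidAlgebra.coeff_eq_zero.mp hx0)
      set rep : c.Quotient → (Fin n →₀ ℕ) := fun s => (AddCon.mk'_surjective s).choose
        with repdef
      have hrep : ∀ s, c.mk' (rep s) = s := fun s => (AddCon.mk'_surjective s).choose_spec
      set m := (x.coeff.support.image hb).min' (hsupp.image hb) with hm
      obtain ⟨s0, hs0supp, hs0⟩ : ∃ s ∈ x.coeff.support, hb s = m := by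
        have h1 := (x.coeff.support.image hb).min'_mem (hsupp.image hb)
        rw [Finset.mem_image] at h1
        obtain ⟨s, hs, hseq⟩ := h1
        exact ⟨s, hs, hseq⟩
      have hmle : ∀ s ∈ x.coeff.support, m ≤ hb s := fun s hs =>
        Finset.min'_le _ _ (Finset.mem_image_of_mem hb hs)
      have hm1 : 1 ≤ m := by
        have h1 := (memP x).mp (hQle hxQ) s0 hs0supp
        omega
      set N := x.coeff.support.sup (fun s => rep s y) with hN
      set Fm : c.Quotient → c.Quotient := fun s =>
        (hb s - m) • c.mk' (Finsupp.single z 1) +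
          c.mk' (core y z (rep s) + (rep s y) • W2 n k a z + (N - rep s y) • W1 n k y)
        with Fmdef
      have keyS : ∀ s ∈ x.coeff.support,
          s + N • c.mk' (W1 n k y) = m • c.mk' (Finsupp.single z 1) + Fm s := by
        intro s hs
        have hNs : rep s y ≤ N := Finset.le_sup (f := fun s => rep s y) hs
        have hk1 := key_rel hy hz hc (rep s) N hNs
        have hk2 := mkeq _ _ hk1
        rw [map_add, map_nsmul, map_add, map_nsmul, hrep] at hk2
        have hbs : hb s = a z * rep s y + rep s z := by
          have h10 := hb_mk (rep s)
          rw [hrep s] at h10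
          exact h10
        have hms := hmle s hs
        rw [hk2, ← hbs]
        simp only [Fmdef]
        rw [← add_assoc, ← add_nsmul]
        congr 2
        omega
      have e1 : x * (AddMonoidAlgebra.of' K c.Quotient (c.mk' (W1 n k y))) ^ N =
          AddMonoidAlgebra.mapDomain (· + N • c.mk' (W1 n k y)) x := by
        rw [of'_pow, mul_of'_eq]
      set x' : AddMonoidAlgebra K c.Quotient := AddMonoidAlgebra.mapDomain Fm x with x'def
      have e2 : (AddMonoidAlgebra.of' K c.Quotient (c.mk' (Finsupp.single z 1))) ^ m * x' =
          AddMonoidAlgebra.mapDomain (fun s => m • c.mk' (Finsupp.single z 1) + Fm s) x := by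
        rw [of'_pow, of'_mul_eq, x'def]
        exact congrArg AddMonoidAlgebra.ofCoeff Finsupp.mapDomain_comp.symm
      have e3 : x * (AddMonoidAlgebra.of' K c.Quotient (c.mk' (W1 n k y))) ^ N =
          (AddMonoidAlgebra.of' K c.Quotient (c.mk' (Finsupp.single z 1))) ^ m * x' := by
        rw [e1, e2]
        exact congrArg AddMonoidAlgebra.ofCoeff (Finsupp.mapDomain_congr keyS)
      have hx'Q : x' ∈ Q := by
        have h4 : (AddMonoidAlgebra.of' K c.Quotient (c.mk' (Finsupp.single z 1))) ^ m * x' ∈ Q := by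
          rw [← e3]; exact Ideal.mul_mem_right _ _ hxQ
        rcases hQ.mem_or_mem h4 with h5 | h5
        · exact absurd (hQ.mem_of_pow_mem m h5) tQ
        · exact h5
      have hFinj : Set.InjOn Fm x.coeff.support := by
        intro s hs u hu hFeq
        have h6 : s + N • c.mk' (W1 n k y) = u + N • c.mk' (W1 n k y) := by
          rw [keyS s hs, keyS u hu, hFeq]
        exact cancel _ _ _ h6
      have hcoeff : x'.coeff (Fm s0) = x.coeff s0 :=
        Finsupp.mapDomain_apply' (x.coeff.support : Set c.Quotient) x.coeff (subset_refl _) hFinj hs0supp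
      have hFsupp : Fm s0 ∈ x'.coeff.support := Finsupp.mem_support_iff.mpr
        (by rw [hcoeff]; exact Finsupp.mem_support_iff.mp hs0supp)
      have hbF : hb (Fm s0) = 0 := by
        have hcore : hb (c.mk' (core y z (rep s0))) = 0 := by
          rw [hb_mk, core_apply, core_apply]
          simp
        simp only [Fmdef, map_add, map_nsmul, hs0, Nat.sub_self, zero_smul, zero_add,
          hb_W1, hb_W2, hcore, smul_eq_mul, mul_zero, zero_mul, add_zero]
      exact ((memP x').mp (hQle hx'Q) _ hFsupp) hbF
    exact (Submodule.eq_bot_iff Q).mpr hzero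
  refine ⟨prime, ?_⟩
  have hPbot : P ≠ ⊥ := by
    intro hPb
    have h1 : AddMonoidAlgebra.of' K c.Quotient (c.mk' (Finsupp.single y 1)) ∈ P := by
      rw [hP]; exact Ideal.subset_span (Or.inl rfl)
    rw [hPb, Ideal.mem_bot, AddMonoidAlgebra.of'_apply] at h1
    exact one_ne_zero (AddMonoidAlgebra.single_eq_zero.mp h1)
  have botprime : (⊥ : Ideal (AddMonoidAlgebra K c.Quotient)).IsPrime := by
    constructor
    · intro htop
      have h1 : (1 : AddMonoidAlgebra K c.Quotient) ∈ (⊥ : Ideal (AddMonoidAlgebra K c.Quotient)) := by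
        rw [htop]; trivial
      rw [Ideal.mem_bot] at h1
      exact one_ne_zero h1
    · intro x₁ x₂ h
      rw [Ideal.mem_bot] at h
      rcases mul_eq_zero.mp h with h1 | h1
      · left; rw [Ideal.mem_bot]; exact h1
      · right; rw [Ideal.mem_bot]; exact h1
  have hset : {Q : Ideal (AddMonoidAlgebra K c.Quotient) | Q.IsPrime ∧ Q < P} = {⊥} := by
    ext Q
    simp only [Set.mem_setOf_eq, Set.mem_singleton_iff]
    constructor
    · rintro ⟨h1, h2⟩; exact main Q h1 h2
    · rintro rfl
      exact ⟨botprime, bot_lt_iff_ne_bot.mpr hPbot⟩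
  rw [hset]
  funext r
  rw [Pi.one_apply, ← Set.encard_eq_chainHeight_of_isChain _ Set.subsingleton_singleton.isChain,
    Set.encard_singleton]
end

section
/- Let K be a field, let 0 < k < n, and let a_{k+1}, …, a_n be integers ≥ 1. Let S be the presented commutative monoid ⟨u₁,…,uₙ | u₁⋯u_k = u_{k+1}^{a_{k+1}}⋯u_n^{a_n}⟩, the quotient of (Fin n →₀ ℕ) by the additive congruence generated by the pair (e₁ + ⋯ + e_k, a_{k+1}·e_{k+1} + ⋯ + a_n·e_n), with quotient map π, and let R = AddMonoidAlgebra K S. Fix y ∈ {1,…,k} and z ∈ {k+1,…,n}, let P_{y,z} be the prime ideal of R generated by the monomials X^{π(e_y)} and X^{π(e_z)}, let T be the localization of R at P_{y,z}, and let φ : R → T be the localization map. Then the principal ideal of T generated by φ(X^{π(e_y)}) equals the a_z-th power of the principal ideal of T generated by φ(X^{π(e_z)}); moreover the ideal of T generated by the image φ(P_{y,z}) equals the principal ideal generated by φ(X^{π(e_z)}). -/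
open Finset AddMonoidAlgebra

section grade

variable (K : Type*) [Field K] {S : Type*} [AddCommMonoid S]

/-- The ideal of elements all of whose monomials have positive grade. -/
def gradeIdeal (g : S →+ ℕ) : Ideal (AddMonoidAlgebra K S) where
  carrier := {x | ∀ s ∈ x.coeff.support, 0 < g s}
  add_mem' := by
    classical
    intro x y hx hy s hs
    rcases Finset.mem_union.mp (Finsupp.support_add (g₁ := x.coeff) (g₂ := y.coeff) hs) with h | h
    exacts [hx s h, hy s h]
  zero_mem' := by simp
  smul_mem' := by
    classical
    intro r x hx s hs
    rw [smul_eq_mul] at hs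
    obtain ⟨t, ht, u, hu, rfl⟩ := Finset.mem_add.mp (AddMonoidAlgebra.support_coeff_mul_subset r x hs)
    have := hx u hu
    rw [map_add]
    omega

theorem mem_gradeIdeal (g : S →+ ℕ) {x : AddMonoidAlgebra K S} :
    x ∈ gradeIdeal K g ↔ ∀ s ∈ x.coeff.support, 0 < g s := Iff.rfl

theorem of'_mem_gradeIdeal (g : S →+ ℕ) {s : S} (hs : 0 < g s) :
    AddMonoidAlgebra.of' K S s ∈ gradeIdeal K g := by
  rw [mem_gradeIdeal]
  intro t ht
  rw [AddMonoidAlgebra.of'_apply, AddMonoidAlgebra.coeff_single] at ht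
  have := Finsupp.support_single_subset ht
  simp only [Finset.mem_singleton] at this
  subst this; exact hs

theorem of'_notMem_span (g : S →+ ℕ) {s₁ s₂ s : S} (h₁ : 0 < g s₁) (h₂ : 0 < g s₂)
    (h : g s = 0) :
    AddMonoidAlgebra.of' K S s ∉
      Ideal.span {AddMonoidAlgebra.of' K S s₁, AddMonoidAlgebra.of' K S s₂} := by
  intro hmem
  have hle : Ideal.span {AddMonoidAlgebra.of' K S s₁, AddMonoidAlgebra.of' K S s₂} ≤
      gradeIdeal K g := by
    rw [Ideal.span_le]
    rintro x (rfl | rfl)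
    exacts [of'_mem_gradeIdeal K g h₁, of'_mem_gradeIdeal K g h₂]
  have := (mem_gradeIdeal K g).mp (hle hmem) s (by
    rw [AddMonoidAlgebra.of'_apply, AddMonoidAlgebra.coeff_single]
    rw [Finsupp.support_single_ne_zero s (one_ne_zero)]
    exact Finset.mem_singleton_self s)
  omega

theorem of'_finsetSum {ι : Type*} (t : Finset ι) (f : ι → S) :
    AddMonoidAlgebra.of' K S (∑ i ∈ t, f i) = ∏ i ∈ t, AddMonoidAlgebra.of' K S (f i) := by
  classical
  induction t using Finset.cons_induction with
  | empty => simp [AddMonoidAlgebra.of'_apply, AddMonoidAlgebra.one_def]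
  | cons i t hi ih =>
      rw [Finset.sum_cons, Finset.prod_cons, ← ih]
      simp [AddMonoidAlgebra.of'_apply, AddMonoidAlgebra.single_mul_single]

theorem of'_nsmul (m : ℕ) (s : S) :
    AddMonoidAlgebra.of' K S (m • s) = AddMonoidAlgebra.of' K S s ^ m := by
  simp [AddMonoidAlgebra.of'_apply, AddMonoidAlgebra.single_pow]

end grade

theorem wordOne_eq (n k : ℕ) :
    wordOne n k = ∑ i ∈ Finset.univ.filter (fun i : Fin n => i.val < k),
      Finsupp.single i 1 := by
  classical
  ext j
  rw [Finset.sum_apply']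
  simp only [Finsupp.single_apply]
  rw [Finset.sum_ite_eq' (Finset.univ.filter (fun i : Fin n => i.val < k)) j (fun _ => 1)]
  simp [wordOne]

theorem wordTwo_eq (n k : ℕ) (a : Fin n → ℕ) :
    wordTwo n k a = ∑ i ∈ Finset.univ.filter (fun i : Fin n => k ≤ i.val),
      a i • Finsupp.single i 1 := by
  classical
  ext j
  rw [Finset.sum_apply']
  simp only [Finsupp.smul_apply, Finsupp.single_apply, smul_eq_mul, mul_ite, mul_one, mul_zero]
  rw [Finset.sum_ite_eq' (Finset.univ.filter (fun i : Fin n => k ≤ i.val)) j a]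
  simp [wordTwo]

theorem stmt5 (K : Type*) [Field K] (n k : ℕ) (hk : 0 < k) (hkn : k < n)
    (a : Fin n → ℕ) (ha : ∀ i : Fin n, k ≤ i.val → 1 ≤ a i)
    (c : AddCon (Fin n →₀ ℕ))
    (hc : c = addConGen (fun x y => x = wordOne n k ∧ y = wordTwo n k a))
    (y z : Fin n) (hy : y.val < k) (hz : k ≤ z.val)
    (P : Ideal (AddMonoidAlgebra K c.Quotient))
    (hP : P = Ideal.span
      {AddMonoidAlgebra.of' K c.Quotient (c.mk' (Finsupp.single y 1)),
       AddMonoidAlgebra.of' K c.Quotient (c.mk' (Finsupp.single z 1))})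
    [hprime : P.IsPrime] :
    Ideal.span {algebraMap (AddMonoidAlgebra K c.Quotient) (Localization.AtPrime P)
        (AddMonoidAlgebra.of' K c.Quotient (c.mk' (Finsupp.single y 1)))} =
      (Ideal.span {algebraMap (AddMonoidAlgebra K c.Quotient) (Localization.AtPrime P)
        (AddMonoidAlgebra.of' K c.Quotient (c.mk' (Finsupp.single z 1)))}) ^ (a z) ∧
    Ideal.map (algebraMap (AddMonoidAlgebra K c.Quotient) (Localization.AtPrime P)) P =
      Ideal.span {algebraMap (AddMonoidAlgebra K c.Quotient) (Localization.AtPrime P)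
        (AddMonoidAlgebra.of' K c.Quotient (c.mk' (Finsupp.single z 1)))} := by
  classical
  set R := AddMonoidAlgebra K c.Quotient with hR
  set T := Localization.AtPrime P with hT
  set φ : R →+* T := algebraMap R T with hφ
  set lt : Finset (Fin n) := Finset.univ.filter (fun i : Fin n => i.val < k) with hlt
  set ge : Finset (Fin n) := Finset.univ.filter (fun i : Fin n => k ≤ i.val) with hge
  have hylt : y ∈ lt := by simp [hlt, hy]
  have hzge : z ∈ ge := by simp [hge, hz]
  -- weighted gradings compatible with the relation
  have keyNE : ∀ w : Fin n → ℕ,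
      (∑ i ∈ lt, w i) = (∑ j ∈ ge, a j * w j) →
      ∀ i : Fin n, 0 < w y → 0 < w z → w i = 0 →
      (AddMonoidAlgebra.of' K c.Quotient (c.mk' (Finsupp.single i 1))) ∉ P := by
    intro w hw i hwy hwz hwi
    set g : (Fin n →₀ ℕ) →+ ℕ :=
      Finsupp.liftAddHom (fun j => AddMonoidHom.mulRight (w j)) with hg
    have hgs : ∀ (j : Fin n) (m : ℕ), g (Finsupp.single j m) = m * w j := by
      intro j m
      simp [hg, Finsupp.liftAddHom_apply_single, AddMonoidHom.mulRight]
    have hle : c ≤ AddCon.ker g := by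
      rw [hc]
      apply AddCon.addConGen_le.mpr
      rintro x₁ x₂ ⟨rfl, rfl⟩
      rw [AddCon.ker_rel]
      rw [wordOne_eq, wordTwo_eq, map_sum, map_sum]
      calc ∑ i ∈ lt, g (Finsupp.single i 1)
          = ∑ i ∈ lt, w i := by
            refine Finset.sum_congr rfl fun j _ => ?_
            rw [hgs]; ring
        _ = ∑ j ∈ ge, a j * w j := hw
        _ = ∑ j ∈ ge, g (a j • Finsupp.single j 1) := by
            refine Finset.sum_congr rfl fun j _ => ?_
            rw [map_nsmul, hgs, smul_eq_mul]; ring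
    set gbar : c.Quotient →+ ℕ := c.lift g hle with hgbar
    have hgbar' : ∀ s : Fin n →₀ ℕ, gbar (c.mk' s) = g s := fun s => AddCon.lift_mk' hle s
    rw [hP]
    apply of'_notMem_span K gbar
    · rw [hgbar', hgs]; omega
    · rw [hgbar', hgs]; omega
    · rw [hgbar', hgs]; omega
  -- units away from y and z
  have hunit : ∀ i : Fin n,
      (AddMonoidAlgebra.of' K c.Quotient (c.mk' (Finsupp.single i 1))) ∉ P →
      IsUnit (φ (AddMonoidAlgebra.of' K c.Quotient (c.mk' (Finsupp.single i 1)))) := by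
    intro i hi
    exact (IsLocalization.AtPrime.isUnit_to_map_iff T P _).mpr hi
  have hunit_lt : ∀ i ∈ lt.erase y,
      IsUnit (φ (AddMonoidAlgebra.of' K c.Quotient (c.mk' (Finsupp.single i 1)))) := by
    intro i hi
    rw [Finset.mem_erase, hlt, Finset.mem_filter] at hi
    set w : Fin n → ℕ := fun j => if j = y then ∑ j' ∈ ge, a j' else
      if k ≤ j.val then 1 else 0 with hwdef
    have hwy : w y = ∑ j' ∈ ge, a j' := by
      show (if y = y then ∑ j' ∈ ge, a j' else if k ≤ y.val then 1 else 0) = _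
      rw [if_pos rfl]
    have hwlt : ∀ j : Fin n, j ≠ y → j.val < k → w j = 0 := by
      intro j h1 h2
      show (if j = y then ∑ j' ∈ ge, a j' else if k ≤ j.val then 1 else 0) = 0
      rw [if_neg h1, if_neg (Nat.not_le.mpr h2)]
    have hwge : ∀ j : Fin n, k ≤ j.val → w j = 1 := by
      intro j h2
      show (if j = y then ∑ j' ∈ ge, a j' else if k ≤ j.val then 1 else 0) = 1
      rw [if_neg (by rintro rfl; omega), if_pos h2]
    have h0 : ∀ j ∈ lt.erase y, w j = 0 := by
      intro j hj
      rw [Finset.mem_erase] at hj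
      have hj2 : j.val < k := by
        have := hj.2; rw [hlt, Finset.mem_filter] at this; exact this.2
      exact hwlt j hj.1 hj2
    have h1 : ∀ j ∈ ge, a j * w j = a j := by
      intro j hj
      have hj2 : k ≤ j.val := by rw [hge, Finset.mem_filter] at hj; exact hj.2
      rw [hwge j hj2, mul_one]
    refine hunit i (keyNE w ?_ i ?_ ?_ ?_)
    · calc ∑ i' ∈ lt, w i'
          = w y + ∑ i' ∈ lt.erase y, w i' := (Finset.add_sum_erase _ _ hylt).symm
        _ = (∑ j' ∈ ge, a j') + ∑ i' ∈ lt.erase y, (0 : ℕ) := by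
            rw [hwy, Finset.sum_congr rfl h0]
        _ = ∑ j ∈ ge, a j * w j := by
            rw [Finset.sum_congr rfl h1]; simp
    · rw [hwy]
      calc 0 < a z := ha z hz
        _ ≤ ∑ j' ∈ ge, a j' := Finset.single_le_sum (fun _ _ => Nat.zero_le _) hzge
    · rw [hwge z hz]; omega
    · exact hwlt i hi.1 hi.2.2
  have hunit_ge : ∀ j ∈ ge.erase z,
      IsUnit (φ (AddMonoidAlgebra.of' K c.Quotient (c.mk' (Finsupp.single j 1)))) := by
    intro j hj
    rw [Finset.mem_erase, hge, Finset.mem_filter] at hj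
    set w : Fin n → ℕ := fun j' => if j' = z then k else
      if j'.val < k then a z else 0 with hwdef
    have hwz : w z = k := by
      show (if z = z then k else if z.val < k then a z else 0) = k
      rw [if_pos rfl]
    have hwlt : ∀ j' : Fin n, j'.val < k → w j' = a z := by
      intro j' h2
      show (if j' = z then k else if j'.val < k then a z else 0) = a z
      rw [if_neg (by rintro rfl; omega), if_pos h2]
    have hwge : ∀ j' : Fin n, j' ≠ z → k ≤ j'.val → w j' = 0 := by
      intro j' h1 h2
      show (if j' = z then k else if j'.val < k then a z else 0) = 0
      rw [if_neg h1, if_neg (Nat.not_lt.mpr h2)]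
    have h0 : ∀ i ∈ lt, w i = a z := by
      intro i hi
      have hi2 : i.val < k := by rw [hlt, Finset.mem_filter] at hi; exact hi.2
      exact hwlt i hi2
    have h1 : ∀ j' ∈ ge.erase z, a j' * w j' = 0 := by
      intro j' hj'
      rw [Finset.mem_erase] at hj'
      have hj2 : k ≤ j'.val := by
        have := hj'.2; rw [hge, Finset.mem_filter] at this; exact this.2
      rw [hwge j' hj'.1 hj2, mul_zero]
    have hcard : lt.card = k := by
      rw [hlt]
      have hset : Finset.univ.filter (fun i : Fin n => i.val < k) =
          Finset.map (Fin.castLEEmb hkn.le) Finset.univ := by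
        ext i
        simp only [Finset.mem_filter, Finset.mem_univ, true_and, Finset.mem_map]
        constructor
        · intro h
          refine ⟨⟨i.val, h⟩, ?_⟩
          ext; simp
        · rintro ⟨i', -, rfl⟩
          simpa using i'.isLt
      rw [hset, Finset.card_map, Finset.card_univ, Fintype.card_fin]
    refine hunit j (keyNE w ?_ j ?_ ?_ ?_)
    · calc ∑ i ∈ lt, w i
          = ∑ i ∈ lt, a z := Finset.sum_congr rfl h0
        _ = k * a z := by rw [Finset.sum_const, hcard, smul_eq_mul]
        _ = a z * w z + ∑ j' ∈ ge.erase z, (0 : ℕ) := by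
            rw [hwz]; simp [mul_comm]
        _ = ∑ j' ∈ ge, a j' * w j' := by
            rw [← Finset.sum_congr rfl h1]
            exact Finset.add_sum_erase _ (fun j' => a j' * w j') hzge
    · rw [hwlt y hy]; exact ha z hz
    · rw [hwz]; omega
    · exact hwge j hj.1 hj.2.2
  -- the key relation in T
  have hΦw : φ (AddMonoidAlgebra.of' K c.Quotient (c.mk' (wordOne n k))) =
      φ (AddMonoidAlgebra.of' K c.Quotient (c.mk' (wordTwo n k a))) := by
    have hrel : c (wordOne n k) (wordTwo n k a) := by
      rw [hc]; exact AddConGen.Rel.of _ _ ⟨rfl, rfl⟩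
    have : c.mk' (wordOne n k) = c.mk' (wordTwo n k a) := (AddCon.eq c).mpr hrel
    rw [this]
  have hΦ1 : φ (AddMonoidAlgebra.of' K c.Quotient (c.mk' (wordOne n k))) =
      ∏ i ∈ lt, φ (AddMonoidAlgebra.of' K c.Quotient (c.mk' (Finsupp.single i 1))) := by
    rw [wordOne_eq, map_sum, of'_finsetSum, map_prod]
  have hΦ2 : φ (AddMonoidAlgebra.of' K c.Quotient (c.mk' (wordTwo n k a))) =
      ∏ j ∈ ge, φ (AddMonoidAlgebra.of' K c.Quotient (c.mk' (Finsupp.single j 1))) ^ a j := by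
    rw [wordTwo_eq, map_sum, of'_finsetSum, map_prod]
    refine Finset.prod_congr rfl fun j _ => ?_
    rw [map_nsmul, of'_nsmul, map_pow]
  have h1 := (Finset.mul_prod_erase lt
    (fun i => φ (AddMonoidAlgebra.of' K c.Quotient (c.mk' (Finsupp.single i 1)))) hylt).symm
  have h2 := Finset.mul_prod_erase ge
    (fun j => φ (AddMonoidAlgebra.of' K c.Quotient (c.mk' (Finsupp.single j 1))) ^ a j) hzge
  have key := h1.symm.trans ((hΦ1.symm.trans (hΦw.trans hΦ2)).trans h2.symm)
  have hu : IsUnit (∏ i ∈ lt.erase y,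
      φ (AddMonoidAlgebra.of' K c.Quotient (c.mk' (Finsupp.single i 1)))) :=
    Finset.prod_induction _ IsUnit (fun _ _ => IsUnit.mul) isUnit_one hunit_lt
  have hv : IsUnit (∏ j ∈ ge.erase z,
      φ (AddMonoidAlgebra.of' K c.Quotient (c.mk' (Finsupp.single j 1))) ^ a j) :=
    Finset.prod_induction _ IsUnit (fun _ _ => IsUnit.mul) isUnit_one
      (fun j hj => (hunit_ge j hj).pow _)
  have hspan : Ideal.span {φ (AddMonoidAlgebra.of' K c.Quotient (c.mk' (Finsupp.single y 1)))} =
      Ideal.span {φ (AddMonoidAlgebra.of' K c.Quotient (c.mk' (Finsupp.single z 1)))} ^ a z := by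
    rw [← Ideal.span_singleton_mul_right_unit hu, key,
      Ideal.span_singleton_mul_right_unit hv, Ideal.span_singleton_pow]
  refine ⟨hspan, ?_⟩
  -- second part
  have hmem : φ (AddMonoidAlgebra.of' K c.Quotient (c.mk' (Finsupp.single y 1))) ∈
      Ideal.span {φ (AddMonoidAlgebra.of' K c.Quotient (c.mk' (Finsupp.single z 1)))} := by
    have h3 : φ (AddMonoidAlgebra.of' K c.Quotient (c.mk' (Finsupp.single y 1))) ∈
        Ideal.span {φ (AddMonoidAlgebra.of' K c.Quotient (c.mk' (Finsupp.single y 1)))} :=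
      Ideal.mem_span_singleton_self _
    rw [hspan] at h3
    exact Ideal.pow_le_self (by have := ha z hz; omega) h3
  calc Ideal.map φ P
      = Ideal.map φ (Ideal.span
        {AddMonoidAlgebra.of' K c.Quotient (c.mk' (Finsupp.single y 1)),
         AddMonoidAlgebra.of' K c.Quotient (c.mk' (Finsupp.single z 1))}) := congrArg _ hP
    _ = Ideal.span (φ '' {AddMonoidAlgebra.of' K c.Quotient (c.mk' (Finsupp.single y 1)),
         AddMonoidAlgebra.of' K c.Quotient (c.mk' (Finsupp.single z 1))}) := Ideal.map_span _ _
    _ = Ideal.span {φ (AddMonoidAlgebra.of' K c.Quotient (c.mk' (Finsupp.single y 1))),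
         φ (AddMonoidAlgebra.of' K c.Quotient (c.mk' (Finsupp.single z 1)))} := by
          rw [Set.image_insert_eq, Set.image_singleton]
    _ = Ideal.span {φ (AddMonoidAlgebra.of' K c.Quotient (c.mk' (Finsupp.single z 1)))} := by
          rw [Ideal.span_insert, sup_eq_right.mpr]
          rw [Ideal.span_le, Set.singleton_subset_iff]
          exact hmem
end

section
/- Let n ≥ 2 and let w₁, w₂, w₃, w₄ ∈ (Fin n →₀ ℕ) be nonzero words such that the two relations (w₁, w₂) and (w₃, w₄) are independent (neither is a consequence of the other, i.e. (w₁,w₂) is not identified by the additive congruence generated by (w₃,w₄) alone, and (w₃,w₄) is not identified by the additive congruence generated by (w₁,w₂) alone) and such that conditions (a)–(d) hold: (a) supp(w₁) ∩ supp(w₂) = ∅ and supp(w₃) ∩ supp(w₄) = ∅; (b) Hsupp(w₁) = ∅ or Hsupp(w₂) = ∅; (c) Hsupp(w₃) = ∅ or Hsupp(w₄) = ∅; (d) with O = {(i,j) : i ∈ {1,2}, j ∈ {3,4}, supp(wᵢ) ∩ supp(w_j) ≠ ∅}, either O = ∅, or O = {(i,j)} is a singleton and Hsupp(w_{i'}) =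 ∅ or Hsupp(w_{j'}) = ∅ (where i' ∈ {1,2}∖{i}, j' ∈ {3,4}∖{j}), or O consists of exactly two pairs sharing a common coordinate and the unique index m occurring in no pair of O satisfies Hsupp(w_m) = ∅. Then the quotient of the free abelian group ℤⁿ = (Fin n → ℤ) by the subgroup generated by the two vectors w₁ − w₂ and w₃ − w₄ is a free abelian group of rank n − 2. -/
/-- The supports of two words intersect nontrivially. -/
def Overlap {n : ℕ} (v w : Fin n →₀ ℕ) : Prop := supp v ∩ supp w ≠ ∅

/-- The two relations `w₁ = w₂` and `w₃ = w₄` are independent: neither is a consequence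
of the additive congruence generated by the other alone. -/
def IndependentRels {n : ℕ} (w₁ w₂ w₃ w₄ : Fin n →₀ ℕ) : Prop :=
  ¬ (addConGen fun x y => x = w₃ ∧ y = w₄) w₁ w₂ ∧
  ¬ (addConGen fun x y => x = w₁ ∧ y = w₂) w₃ w₄

/-- Condition (d) of the two-relator normality criterion, with
`O = {(i,j) : i ∈ {1,2}, j ∈ {3,4}, supp(wᵢ) ∩ supp(w_j) ≠ ∅}`:
either `O = ∅`; or `O` is a singleton `{(i,j)}` and `Hsupp(w_{i'}) = ∅` or
`Hsupp(w_{j'}) = ∅` for the complementary indices `i', j'`; or `O` consists of exactly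
two pairs sharing a common coordinate and the unique index `m` occurring in no pair of
`O` satisfies `Hsupp(w_m) = ∅`. -/
def CondD {n : ℕ} (w₁ w₂ w₃ w₄ : Fin n →₀ ℕ) : Prop :=
  -- O = ∅
  (¬ Overlap w₁ w₃ ∧ ¬ Overlap w₁ w₄ ∧ ¬ Overlap w₂ w₃ ∧ ¬ Overlap w₂ w₄) ∨
  -- O = {(i,j)} a singleton
  (Overlap w₁ w₃ ∧ ¬ Overlap w₁ w₄ ∧ ¬ Overlap w₂ w₃ ∧ ¬ Overlap w₂ w₄ ∧
    (Hsupp w₂ = ∅ ∨ Hsupp w₄ = ∅)) ∨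
  (¬ Overlap w₁ w₃ ∧ Overlap w₁ w₄ ∧ ¬ Overlap w₂ w₃ ∧ ¬ Overlap w₂ w₄ ∧
    (Hsupp w₂ = ∅ ∨ Hsupp w₃ = ∅)) ∨
  (¬ Overlap w₁ w₃ ∧ ¬ Overlap w₁ w₄ ∧ Overlap w₂ w₃ ∧ ¬ Overlap w₂ w₄ ∧
    (Hsupp w₁ = ∅ ∨ Hsupp w₄ = ∅)) ∨
  (¬ Overlap w₁ w₃ ∧ ¬ Overlap w₁ w₄ ∧ ¬ Overlap w₂ w₃ ∧ Overlap w₂ w₄ ∧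
    (Hsupp w₁ = ∅ ∨ Hsupp w₃ = ∅)) ∨
  -- O consists of exactly two pairs sharing a common coordinate
  (Overlap w₁ w₃ ∧ Overlap w₁ w₄ ∧ ¬ Overlap w₂ w₃ ∧ ¬ Overlap w₂ w₄ ∧ Hsupp w₂ = ∅) ∨
  (¬ Overlap w₁ w₃ ∧ ¬ Overlap w₁ w₄ ∧ Overlap w₂ w₃ ∧ Overlap w₂ w₄ ∧ Hsupp w₁ = ∅) ∨
  (Overlap w₁ w₃ ∧ ¬ Overlap w₁ w₄ ∧ Overlap w₂ w₃ ∧ ¬ Overlap w₂ w₄ ∧ Hsupp w₄ = ∅) ∨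
  (¬ Overlap w₁ w₃ ∧ Overlap w₁ w₄ ∧ ¬ Overlap w₂ w₃ ∧ Overlap w₂ w₄ ∧ Hsupp w₃ = ∅)


lemma lemA {n : ℕ} (v u : Fin n → ℤ) (i j : Fin n) (hij : i ≠ j)
    (hvi : v i = 1) (hvj : v j = 0) (hui : u i = 0) (huj : u j = 1) :
    Nonempty ((Fin n → ℤ) ⧸ AddSubgroup.closure {v, u} ≃+ (Fin (n - 2) → ℤ)) := by
  classical
  set a : Fin n → ℤ := fun k => if k = i ∨ k = j then 0 else v k with ha
  set b : Fin n → ℤ := fun k => if k = i ∨ k = j then 0 else u k with hb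
  let π : (Fin n → ℤ) →+ ({k : Fin n // ¬ (k = i ∨ k = j)} → ℤ) :=
  { toFun := fun x k => x k.1 - x i * a k.1 - x j * b k.1
    map_zero' := by ext k; simp
    map_add' := by intro x y; ext k; simp; ring }
  have hπ : ∀ (x : Fin n → ℤ) (k : {k : Fin n // ¬ (k = i ∨ k = j)}),
      π x k = x k.1 - x i * v k.1 - x j * u k.1 := by
    intro x k
    have hk := k.2
    simp only [π, AddMonoidHom.coe_mk, ZeroHom.coe_mk, ha, hb, if_neg hk]
  have hsurj : Function.Surjective π := by
    intro y
    refine ⟨fun k => if h : ¬ (k = i ∨ k = j) then y ⟨k, h⟩ else 0, ?_⟩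
    ext k
    have hk := k.2
    rw [hπ]
    simp [hk]
  have hker : π.ker = AddSubgroup.closure {v, u} := by
    ext x
    rw [AddMonoidHom.mem_ker, AddSubgroup.mem_closure_pair]
    constructor
    · intro hx
      refine ⟨x i, x j, ?_⟩
      ext k
      by_cases hki : k = i
      · subst hki; simp [hvi, hui]
      by_cases hkj : k = j
      · subst hkj; simp [hvj, huj]
      · have : π x ⟨k, by tauto⟩ = 0 := by rw [hx]; rfl
        rw [hπ] at this
        simp only [Pi.add_apply, Pi.smul_apply, smul_eq_mul]
        linarith
    · rintro ⟨m, l, rfl⟩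
      ext k
      rw [hπ]
      simp [hvi, hvj, hui, huj]
      try ring
  have hcard : Fintype.card {k : Fin n // ¬ (k = i ∨ k = j)} = n - 2 := by
    rw [Fintype.card_subtype_compl]
    congr 1
    · simp
    · rw [Fintype.card_subtype]
      have : Finset.filter (fun k : Fin n => k = i ∨ k = j) Finset.univ = {i, j} := by
        ext k; simp
      rw [this, Finset.card_insert_of_notMem (by simp [hij]), Finset.card_singleton]
  rw [← hker]
  exact ⟨(QuotientAddGroup.quotientKerEquivOfSurjective π hsurj).trans
    (AddEquiv.arrowCongr (Fintype.equivFinOfCardEq hcard) (AddEquiv.refl ℤ))⟩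


lemma closure_pair_congr {M : Type*} [AddCommGroup M] (v u v' u' : M)
    (h1 : ∃ a b : ℤ, a • v + b • u = v') (h2 : ∃ a b : ℤ, a • v + b • u = u')
    (h3 : ∃ a b : ℤ, a • v' + b • u' = v) (h4 : ∃ a b : ℤ, a • v' + b • u' = u) :
    AddSubgroup.closure {v, u} = AddSubgroup.closure {v', u'} := by
  apply le_antisymm <;> rw [AddSubgroup.closure_le] <;> intro x hx <;>
    simp only [Set.mem_insert_iff, Set.mem_singleton_iff] at hx <;>
    rcases hx with rfl | rfl
  · exact AddSubgroup.mem_closure_pair.2 h3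
  · exact AddSubgroup.mem_closure_pair.2 h4
  · exact AddSubgroup.mem_closure_pair.2 h1
  · exact AddSubgroup.mem_closure_pair.2 h2

lemma lemB {n : ℕ} (v u : Fin n → ℤ) (i j : Fin n)
    (hvi : v i = 1 ∨ v i = -1) (hui : u i = 0) (huj : u j = 1 ∨ u j = -1) :
    Nonempty ((Fin n → ℤ) ⧸ AddSubgroup.closure {v, u} ≃+ (Fin (n - 2) → ℤ)) := by
  have hij : i ≠ j := by rintro rfl; rcases huj with h | h <;> omega
  have hε2 : v i * v i = 1 := by rcases hvi with h | h <;> rw [h] <;> ring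
  have hδ2 : u j * u j = 1 := by rcases huj with h | h <;> rw [h] <;> ring
  set v' : Fin n → ℤ := fun k => v i * v k - (v i * v j * u j) * u k with hv'
  set u' : Fin n → ℤ := fun k => u j * u k with hu'
  have hcl : AddSubgroup.closure {v, u} = AddSubgroup.closure {v', u'} := by
    refine closure_pair_congr v u v' u'
      ⟨v i, -(v i * v j * u j), ?_⟩ ⟨0, u j, ?_⟩ ⟨v i, v j, ?_⟩ ⟨0, u j, ?_⟩
    · ext k
      simp only [hv', hu', Pi.add_apply, Pi.smul_apply, smul_eq_mul]
      ring
    · ext k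
      simp only [hv', hu', Pi.add_apply, Pi.smul_apply, smul_eq_mul]
      ring
    · ext k
      simp only [hv', hu', Pi.add_apply, Pi.smul_apply, smul_eq_mul]
      linear_combination (v k - v j * u j * u k) * hε2
    · ext k
      simp only [hv', hu', Pi.add_apply, Pi.smul_apply, smul_eq_mul]
      linear_combination (u k) * hδ2
  rw [hcl]
  refine lemA v' u' i j hij ?_ ?_ ?_ ?_
  · simp only [hv', hui, mul_zero, sub_zero]; exact hε2
  · simp only [hv']; linear_combination (-(v i * v j)) * hδ2
  · simp only [hu', hui, mul_zero]
  · simp only [hu']; exact hδ2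

lemma lemB' {n : ℕ} (v u : Fin n → ℤ) (i j : Fin n)
    (hvi : v i = 1 ∨ v i = -1) (huj : u j = 1 ∨ u j = -1) (hvj : v j = 0) :
    Nonempty ((Fin n → ℤ) ⧸ AddSubgroup.closure {v, u} ≃+ (Fin (n - 2) → ℤ)) := by
  rw [Set.pair_comm]
  exact lemB u v j i huj hvj hvi

lemma of_not_overlap {n : ℕ} {a b : Fin n →₀ ℕ} (h : ¬ Overlap a b) :
    supp a ∩ supp b = ∅ := not_not.mp h

lemma pivot3 {n : ℕ} (w a b c : Fin n →₀ ℕ) (hw : Hsupp w = ∅) (hne : w ≠ 0)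
    (h1 : supp w ∩ supp a = ∅) (h2 : supp w ∩ supp b = ∅) (h3 : supp w ∩ supp c = ∅) :
    ∃ i, w i = 1 ∧ a i = 0 ∧ b i = 0 ∧ c i = 0 := by
  obtain ⟨i, hi⟩ : ∃ i, w i ≠ 0 := by
    rcases Finsupp.ne_iff.1 hne with ⟨i, hi⟩
    exact ⟨i, by simpa using hi⟩
  have hw1 : w i = 1 := by
    have := Set.eq_empty_iff_forall_notMem.1 hw i
    simp only [Hsupp, Set.mem_setOf_eq, not_le] at this
    omega
  have key : ∀ x : Fin n →₀ ℕ, supp w ∩ supp x = ∅ → x i = 0 := by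
    intro x hx
    by_contra hxi
    exact Set.eq_empty_iff_forall_notMem.1 hx i ⟨hi, hxi⟩
  exact ⟨i, hw1, key a h1, key b h2, key c h3⟩

theorem stmt8 (n : ℕ) (hn : 2 ≤ n)
    (w₁ w₂ w₃ w₄ : Fin n →₀ ℕ)
    (h₁ : w₁ ≠ 0) (h₂ : w₂ ≠ 0) (h₃ : w₃ ≠ 0) (h₄ : w₄ ≠ 0)
    (hind : IndependentRels w₁ w₂ w₃ w₄)
    (ha : supp w₁ ∩ supp w₂ = ∅ ∧ supp w₃ ∩ supp w₄ = ∅)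
    (hb : Hsupp w₁ = ∅ ∨ Hsupp w₂ = ∅)
    (hcnd : Hsupp w₃ = ∅ ∨ Hsupp w₄ = ∅)
    (hd : CondD w₁ w₂ w₃ w₄)
    (H : AddSubgroup (Fin n → ℤ))
    (hH : H = AddSubgroup.closure
      {fun i => (w₁ i : ℤ) - (w₂ i : ℤ), fun i => (w₃ i : ℤ) - (w₄ i : ℤ)}) :
    Nonempty (((Fin n → ℤ) ⧸ H) ≃+ (Fin (n - 2) → ℤ)) := by
  subst hH
  set v : Fin n → ℤ := fun k => (w₁ k : ℤ) - (w₂ k : ℤ) with hv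
  set u : Fin n → ℤ := fun k => (w₃ k : ℤ) - (w₄ k : ℤ) with hu
  have ha2' : supp w₄ ∩ supp w₃ = ∅ := by rw [Set.inter_comm]; exact ha.2
  have ha1' : supp w₂ ∩ supp w₁ = ∅ := by rw [Set.inter_comm]; exact ha.1
  -- unconditional pivot for u
  have hj : ∃ j, u j = 1 ∨ u j = -1 := by
    rcases hcnd with h | h
    · obtain ⟨j, p1, p2, -, -⟩ := pivot3 w₃ w₄ w₄ w₄ h h₃ ha.2 ha.2 ha.2
      exact ⟨j, Or.inl (by simp [hu, p1, p2])⟩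
    · obtain ⟨j, p1, p2, -, -⟩ := pivot3 w₄ w₃ w₃ w₃ h h₄ ha2' ha2' ha2'
      exact ⟨j, Or.inr (by simp [hu, p1, p2])⟩
  -- unconditional pivot for v
  have hi : ∃ i, v i = 1 ∨ v i = -1 := by
    rcases hb with h | h
    · obtain ⟨i, p1, p2, -, -⟩ := pivot3 w₁ w₂ w₂ w₂ h h₁ ha.1 ha.1 ha.1
      exact ⟨i, Or.inl (by simp [hv, p1, p2])⟩
    · obtain ⟨i, p1, p2, -, -⟩ := pivot3 w₂ w₁ w₁ w₁ h h₂ ha1' ha1' ha1'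
      exact ⟨i, Or.inr (by simp [hv, p1, p2])⟩
  have finishB : (∃ i, (v i = 1 ∨ v i = -1) ∧ u i = 0) →
      Nonempty (((Fin n → ℤ) ⧸ AddSubgroup.closure {v, u}) ≃+ (Fin (n - 2) → ℤ)) := by
    rintro ⟨i, hvi, hui⟩
    obtain ⟨j, huj⟩ := hj
    exact lemB v u i j hvi hui huj
  have finishB' : (∃ j, (u j = 1 ∨ u j = -1) ∧ v j = 0) →
      Nonempty (((Fin n → ℤ) ⧸ AddSubgroup.closure {v, u}) ≃+ (Fin (n - 2) → ℤ)) := by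
    rintro ⟨j, huj, hvj⟩
    obtain ⟨i, hvi⟩ := hi
    exact lemB' v u i j hvi huj hvj
  -- the four pivot scenarios
  have pB₁ : Hsupp w₁ = ∅ → supp w₁ ∩ supp w₃ = ∅ → supp w₁ ∩ supp w₄ = ∅ →
      Nonempty (((Fin n → ℤ) ⧸ AddSubgroup.closure {v, u}) ≃+ (Fin (n - 2) → ℤ)) := by
    intro h d3 d4
    obtain ⟨i, p1, p2, p3, p4⟩ := pivot3 w₁ w₂ w₃ w₄ h h₁ ha.1 d3 d4
    exact finishB ⟨i, Or.inl (by simp [hv, p1, p2]), by simp [hu, p3, p4]⟩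
  have pB₂ : Hsupp w₂ = ∅ → supp w₂ ∩ supp w₃ = ∅ → supp w₂ ∩ supp w₄ = ∅ →
      Nonempty (((Fin n → ℤ) ⧸ AddSubgroup.closure {v, u}) ≃+ (Fin (n - 2) → ℤ)) := by
    intro h d3 d4
    obtain ⟨i, p1, p2, p3, p4⟩ := pivot3 w₂ w₁ w₃ w₄ h h₂ ha1' d3 d4
    exact finishB ⟨i, Or.inr (by simp [hv, p1, p2]), by simp [hu, p3, p4]⟩
  have pB'₃ : Hsupp w₃ = ∅ → supp w₃ ∩ supp w₁ = ∅ → supp w₃ ∩ supp w₂ = ∅ →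
      Nonempty (((Fin n → ℤ) ⧸ AddSubgroup.closure {v, u}) ≃+ (Fin (n - 2) → ℤ)) := by
    intro h d1 d2
    obtain ⟨j, p1, p2, p3, p4⟩ := pivot3 w₃ w₄ w₁ w₂ h h₃ ha.2 d1 d2
    exact finishB' ⟨j, Or.inl (by simp [hu, p1, p2]), by simp [hv, p3, p4]⟩
  have pB'₄ : Hsupp w₄ = ∅ → supp w₄ ∩ supp w₁ = ∅ → supp w₄ ∩ supp w₂ = ∅ →
      Nonempty (((Fin n → ℤ) ⧸ AddSubgroup.closure {v, u}) ≃+ (Fin (n - 2) → ℤ)) := by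
    intro h d1 d2
    obtain ⟨j, p1, p2, p3, p4⟩ := pivot3 w₄ w₃ w₁ w₂ h h₄ ha2' d1 d2
    exact finishB' ⟨j, Or.inr (by simp [hu, p1, p2]), by simp [hv, p3, p4]⟩
  have ic : ∀ {a b : Fin n →₀ ℕ}, ¬ Overlap a b → supp b ∩ supp a = ∅ := by
    intro a b h; rw [Set.inter_comm]; exact of_not_overlap h
  rcases hd with ⟨d13, d14, d23, d24⟩ |
    ⟨o13, d14, d23, d24, h2e | h4e⟩ | ⟨d13, o14, d23, d24, h2e | h3e⟩ |
    ⟨d13, d14, o23, d24, h1e | h4e⟩ | ⟨d13, d14, d23, o24, h1e | h3e⟩ |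
    ⟨o13, o14, d23, d24, h2e⟩ | ⟨d13, d14, o23, o24, h1e⟩ |
    ⟨o13, d14, o23, d24, h4e⟩ | ⟨d13, o14, d23, o24, h3e⟩
  · rcases hb with h | h
    · exact pB₁ h (of_not_overlap d13) (of_not_overlap d14)
    · exact pB₂ h (of_not_overlap d23) (of_not_overlap d24)
  · exact pB₂ h2e (of_not_overlap d23) (of_not_overlap d24)
  · exact pB'₄ h4e (ic d14) (ic d24)
  · exact pB₂ h2e (of_not_overlap d23) (of_not_overlap d24)
  · exact pB'₃ h3e (ic d13) (ic d23)
  · exact pB₁ h1e (of_not_overlap d13) (of_not_overlap d14)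
  · exact pB'₄ h4e (ic d14) (ic d24)
  · exact pB₁ h1e (of_not_overlap d13) (of_not_overlap d14)
  · exact pB'₃ h3e (ic d13) (ic d23)
  · exact pB₂ h2e (of_not_overlap d23) (of_not_overlap d24)
  · exact pB₁ h1e (of_not_overlap d13) (of_not_overlap d14)
  · exact pB'₄ h4e (ic d14) (ic d24)
  · exact pB'₃ h3e (ic d13) (ic d23)
end

section
/- Let n ≥ 2 and let w₁, w₂, w₃, w₄ ∈ (Fin n →₀ ℕ) be nonzero words such that the two relations (w₁, w₂) and (w₃, w₄) are independent (neither is a consequence of the congruence generated by the other alone) and such that conditions (a)–(d) hold: (a) supp(w₁) ∩ supp(w₂) = ∅ and supp(w₃) ∩ supp(w₄) = ∅; (b) Hsupp(w₁) = ∅ or Hsupp(w₂) = ∅; (c) Hsupp(w₃) = ∅ or Hsupp(w₄) = ∅; (d) with O = {(i,j) : i ∈ {1,2}, j ∈ {3,4}, supp(wᵢ) ∩ supp(w_j) ≠ ∅}, either O = ∅, or O = {(i,j)} is a singleton and Hsupp(w_{i'}) = ∅ or Hsupp(w_{j'}) = ∅ (where i' ∈ {1,2}∖{i}, j' ∈ {3,4}∖{j}),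 or O consists of exactly two pairs sharing a common coordinate and the unique index m occurring in no pair of O satisfies Hsupp(w_m) = ∅. Let S be the quotient of (Fin n →₀ ℕ) by the additive congruence generated by the pairs (w₁, w₂) and (w₃, w₄). Then S is a cancellative monoid: for all a, b, c ∈ S, a + b = a + c implies b = c. -/
section Aux

variable {n : ℕ}

private lemma nsmul_con (c : AddCon (Fin n →₀ ℕ)) {u v : Fin n →₀ ℕ} (h : c u v) (k : ℕ) :
    c (k • u) (k • v) := by
  induction k with
  | zero => simpa using c.refl 0
  | succ m ih => simpa [succ_nsmul] using c.add ih h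

private lemma smul_add_apply (k : ℕ) (u r : Fin n →₀ ℕ) (j : Fin n) :
    ((k • u + r) j : ℤ) = k * u j + r j := by
  simp only [Finsupp.add_apply, Finsupp.smul_apply, smul_eq_mul]
  push_cast
  ring

/-- One-relation rewriting, nonnegative coefficient. -/
private lemma onerel_core (c : AddCon (Fin n →₀ ℕ)) {u v : Fin n →₀ ℕ} (huv : c u v)
    (hd : ∀ j, u j ≠ 0 → v j = 0) (t : ℕ) (x z : Fin n →₀ ℕ)
    (hid : ∀ j, (x j : ℤ) - z j = (t : ℤ) * ((u j : ℤ) - v j)) : c x z := by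
  have hle : t • u ≤ x := by
    refine Finsupp.le_def.mpr fun j => ?_
    by_cases hu : u j = 0
    · simp [hu]
    · have hv := hd j hu
      have h1 := hid j
      rw [hv] at h1
      have h2 : ((t • u) j : ℤ) ≤ (x j : ℤ) := by
        have hz : (0:ℤ) ≤ z j := Int.ofNat_nonneg _
        simp only [Finsupp.smul_apply, smul_eq_mul]
        push_cast at h1 ⊢
        linarith
      exact_mod_cast h2
  obtain ⟨r, hr⟩ := le_iff_exists_add.mp hle
  have hz : z = t • v + r := by
    ext j
    have h1 := hid j
    have h2 : (x j : ℤ) = t * u j + r j := by rw [hr]; exact smul_add_apply t u r j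
    have h3 : ((t • v + r) j : ℤ) = t * v j + r j := smul_add_apply t v r j
    have : (z j : ℤ) = ((t • v + r) j : ℤ) := by rw [h3]; linarith
    exact_mod_cast this
  rw [hr, hz]
  exact c.add (nsmul_con c huv t) (c.refl r)

/-- One-relation rewriting, arbitrary integer coefficient. -/
private lemma onerel (c : AddCon (Fin n →₀ ℕ)) {u v : Fin n →₀ ℕ} (huv : c u v)
    (hd : ∀ j, u j ≠ 0 → v j = 0) (hd' : ∀ j, v j ≠ 0 → u j = 0)
    (t : ℤ) (x z : Fin n →₀ ℕ)
    (hid : ∀ j, (x j : ℤ) - z j = t * ((u j : ℤ) - v j)) : c x z := by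
  rcases le_or_gt 0 t with ht | ht
  · refine onerel_core c huv hd t.toNat x z fun j => ?_
    rw [Int.toNat_of_nonneg ht]; exact hid j
  · refine onerel_core c (c.symm huv) hd' (-t).toNat x z fun j => ?_
    rw [Int.toNat_of_nonneg (by omega)]
    have := hid j; push_cast at this ⊢; linarith

/-- Main construction, with the second word `u₂` "clean" and `s ≥ 0`. -/
private lemma main_core (c : AddCon (Fin n →₀ ℕ)) {u₁ u₂ u₃ u₄ : Fin n →₀ ℕ}
    (h12 : c u₁ u₂) (h34 : c u₃ u₄)
    (hCD : ∀ j, u₃ j ≠ 0 → u₄ j = 0)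
    (hcl : ∀ j, u₂ j ≠ 0 → u₁ j = 0 ∧ u₃ j = 0 ∧ u₄ j = 0)
    (x y : Fin n →₀ ℕ) (s : ℕ) (t : ℤ)
    (hid : ∀ j, (x j : ℤ) - y j =
      (s : ℤ) * ((u₁ j : ℤ) - u₂ j) + t * ((u₃ j : ℤ) - u₄ j)) : c x y := by
  have hCD' : ∀ j, u₄ j ≠ 0 → u₃ j = 0 := by
    intro j h4
    by_contra h3
    exact h4 (hCD j h3)
  have hle : s • u₂ ≤ y := by
    refine Finsupp.le_def.mpr fun j => ?_
    by_cases hu : u₂ j = 0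
    · simp [hu]
    · obtain ⟨e1, e3, e4⟩ := hcl j hu
      have h1 := hid j
      rw [e1, e3, e4] at h1
      have h2 : ((s • u₂) j : ℤ) ≤ (y j : ℤ) := by
        have hx : (0:ℤ) ≤ x j := Int.ofNat_nonneg _
        simp only [Finsupp.smul_apply, smul_eq_mul]
        push_cast at h1 ⊢
        linarith
      exact_mod_cast h2
  obtain ⟨r, hr⟩ := le_iff_exists_add.mp hle
  set z : Fin n →₀ ℕ := s • u₁ + r with hzdef
  have hzy : c z y := by
    rw [hr, hzdef]
    exact c.add (nsmul_con c h12 s) (c.refl r)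
  have hxz : c x z := by
    refine onerel c h34 hCD hCD' t x z fun j => ?_
    have h1 := hid j
    have hyj : (y j : ℤ) = s * u₂ j + r j := by rw [hr]; exact smul_add_apply s u₂ r j
    have hzj : (z j : ℤ) = s * u₁ j + r j := by rw [hzdef]; exact smul_add_apply s u₁ r j
    linarith
  exact c.trans hxz hzy

/-- Main construction, with the second word `u₂` "clean", arbitrary signs. -/
private lemma main_lem (c : AddCon (Fin n →₀ ℕ)) {u₁ u₂ u₃ u₄ : Fin n →₀ ℕ}
    (h12 : c u₁ u₂) (h34 : c u₃ u₄)
    (hCD : ∀ j, u₃ j ≠ 0 → u₄ j = 0)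
    (hcl : ∀ j, u₂ j ≠ 0 → u₁ j = 0 ∧ u₃ j = 0 ∧ u₄ j = 0)
    (x y : Fin n →₀ ℕ) (s t : ℤ)
    (hid : ∀ j, (x j : ℤ) - y j =
      s * ((u₁ j : ℤ) - u₂ j) + t * ((u₃ j : ℤ) - u₄ j)) : c x y := by
  rcases le_or_gt 0 s with hs | hs
  · refine main_core c h12 h34 hCD hcl x y s.toNat t fun j => ?_
    rw [Int.toNat_of_nonneg hs]; exact hid j
  · refine c.symm (main_core c h12 h34 hCD hcl y x (-s).toNat (-t) fun j => ?_)
    rw [Int.toNat_of_nonneg (by omega)]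
    have := hid j; push_cast at this ⊢; linarith

private lemma disj_of {v w : Fin n →₀ ℕ}
    (h : {i | v i ≠ 0} ∩ {i | w i ≠ 0} = (∅ : Set (Fin n))) :
    ∀ j, v j ≠ 0 → w j = 0 := by
  intro j hv
  by_contra hw
  exact Set.eq_empty_iff_forall_notMem.mp h j ⟨hv, hw⟩

end Aux

theorem stmt9 (n : ℕ) (hn : 2 ≤ n)
    (w₁ w₂ w₃ w₄ : Fin n →₀ ℕ)
    (h₁ : w₁ ≠ 0) (h₂ : w₂ ≠ 0) (h₃ : w₃ ≠ 0) (h₄ : w₄ ≠ 0)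
    (hind : IndependentRels w₁ w₂ w₃ w₄)
    (ha : supp w₁ ∩ supp w₂ = ∅ ∧ supp w₃ ∩ supp w₄ = ∅)
    (hb : Hsupp w₁ = ∅ ∨ Hsupp w₂ = ∅)
    (hcnd : Hsupp w₃ = ∅ ∨ Hsupp w₄ = ∅)
    (hd : CondD w₁ w₂ w₃ w₄)
    (c : AddCon (Fin n →₀ ℕ))
    (hc : c = addConGen (fun x y => (x = w₁ ∧ y = w₂) ∨ (x = w₃ ∧ y = w₄))) :
    ∀ a b d : c.Quotient, a + b = a + d → b = d := by
  -- basic disjointness facts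
  have dAB : ∀ j, w₁ j ≠ 0 → w₂ j = 0 := disj_of ha.1
  have dBA : ∀ j, w₂ j ≠ 0 → w₁ j = 0 := fun j h2 => by
    by_contra h1; exact h2 (dAB j h1)
  have dCD : ∀ j, w₃ j ≠ 0 → w₄ j = 0 := disj_of ha.2
  have dDC : ∀ j, w₄ j ≠ 0 → w₃ j = 0 := fun j h4 => by
    by_contra h3; exact h4 (dCD j h3)
  -- the generators are congruent
  have h12 : c w₁ w₂ := by
    rw [hc]; exact AddConGen.Rel.of _ _ (Or.inl ⟨rfl, rfl⟩)
  have h34 : c w₃ w₄ := by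
    rw [hc]; exact AddConGen.Rel.of _ _ (Or.inr ⟨rfl, rfl⟩)
  -- the congruence is contained in the lattice relation
  have hLcon : ∀ x y : Fin n →₀ ℕ, c x y →
      ∃ s t : ℤ, ∀ j, (x j : ℤ) - y j =
        s * ((w₁ j : ℤ) - w₂ j) + t * ((w₃ j : ℤ) - w₄ j) := by
    intro x y hxy
    rw [hc] at hxy
    induction hxy with
    | of a b hab =>
      rcases hab with ⟨rfl, rfl⟩ | ⟨rfl, rfl⟩
      · exact ⟨1, 0, fun j => by ring⟩
      · exact ⟨0, 1, fun j => by ring⟩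
    | refl a => exact ⟨0, 0, fun j => by ring⟩
    | symm _ ih =>
      obtain ⟨s, t, h⟩ := ih
      exact ⟨-s, -t, fun j => by have := h j; linarith⟩
    | trans _ _ ih1 ih2 =>
      obtain ⟨s, t, h⟩ := ih1
      obtain ⟨s', t', h'⟩ := ih2
      refine ⟨s + s', t + t', fun j => ?_⟩
      have := h j; have := h' j
      ring_nf
      ring_nf at this ⊢
      linarith
    | add _ _ ih1 ih2 =>
      obtain ⟨s, t, h⟩ := ih1
      obtain ⟨s', t', h'⟩ := ih2
      refine ⟨s + s', t + t', fun j => ?_⟩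
      have h1 := h j; have h2 := h' j
      simp only [Finsupp.add_apply]
      push_cast
      ring_nf
      ring_nf at h1 h2 ⊢
      linarith
  -- in every case of CondD, one of the four words is clean, hence the
  -- lattice relation is contained in the congruence
  have key : ∀ x y : Fin n →₀ ℕ,
      (∃ s t : ℤ, ∀ j, (x j : ℤ) - y j =
        s * ((w₁ j : ℤ) - w₂ j) + t * ((w₃ j : ℤ) - w₄ j)) → c x y := by
    -- extract a clean word from CondD
    have hclean :
        (∀ j, w₂ j ≠ 0 → w₃ j = 0 ∧ w₄ j = 0) ∨
        (∀ j, w₁ j ≠ 0 → w₃ j = 0 ∧ w₄ j = 0) ∨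
        (∀ j, w₄ j ≠ 0 → w₁ j = 0 ∧ w₂ j = 0) ∨
        (∀ j, w₃ j ≠ 0 → w₁ j = 0 ∧ w₂ j = 0) := by
      rcases hd with ⟨o13, o14, o23, o24⟩ | ⟨o13, o14, o23, o24, -⟩ |
        ⟨o13, o14, o23, o24, -⟩ | ⟨o13, o14, o23, o24, -⟩ | ⟨o13, o14, o23, o24, -⟩ |
        ⟨o13, o14, o23, o24, -⟩ | ⟨o13, o14, o23, o24, -⟩ | ⟨o13, o14, o23, o24, -⟩ |
        ⟨o13, o14, o23, o24, -⟩
      · exact Or.inl fun j h => ⟨disj_of (not_ne_iff.mp o23) j h, disj_of (not_ne_iff.mp o24) j h⟩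
      · exact Or.inl fun j h => ⟨disj_of (not_ne_iff.mp o23) j h, disj_of (not_ne_iff.mp o24) j h⟩
      · exact Or.inl fun j h => ⟨disj_of (not_ne_iff.mp o23) j h, disj_of (not_ne_iff.mp o24) j h⟩
      · exact Or.inr (Or.inl fun j h =>
          ⟨disj_of (not_ne_iff.mp o13) j h, disj_of (not_ne_iff.mp o14) j h⟩)
      · exact Or.inr (Or.inl fun j h =>
          ⟨disj_of (not_ne_iff.mp o13) j h, disj_of (not_ne_iff.mp o14) j h⟩)
      · exact Or.inl fun j h => ⟨disj_of (not_ne_iff.mp o23) j h, disj_of (not_ne_iff.mp o24) j h⟩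
      · exact Or.inr (Or.inl fun j h =>
          ⟨disj_of (not_ne_iff.mp o13) j h, disj_of (not_ne_iff.mp o14) j h⟩)
      · -- w₄ clean: ¬ Overlap w₁ w₄, ¬ Overlap w₂ w₄
        refine Or.inr (Or.inr (Or.inl fun j h => ⟨?_, ?_⟩))
        · by_contra h1
          exact h (disj_of (not_ne_iff.mp o14) j h1)
        · by_contra h2
          exact h (disj_of (not_ne_iff.mp o24) j h2)
      · -- w₃ clean: ¬ Overlap w₁ w₃, ¬ Overlap w₂ w₃
        refine Or.inr (Or.inr (Or.inr fun j h => ⟨?_, ?_⟩))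
        · by_contra h1
          exact h (disj_of (not_ne_iff.mp o13) j h1)
        · by_contra h2
          exact h (disj_of (not_ne_iff.mp o23) j h2)
    rintro x y ⟨s, t, hid⟩
    rcases hclean with hcl | hcl | hcl | hcl
    · -- w₂ clean: use (w₁, w₂, w₃, w₄) with coefficients (s, t)
      exact main_lem c h12 h34 dCD (fun j h => ⟨dBA j h, (hcl j h).1, (hcl j h).2⟩) x y s t hid
    · -- w₁ clean: use (w₂, w₁, w₃, w₄) with coefficients (-s, t)
      refine main_lem c (c.symm h12) h34 dCD
        (fun j h => ⟨dAB j h, (hcl j h).1, (hcl j h).2⟩) x y (-s) t fun j => ?_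
      have := hid j; linarith
    · -- w₄ clean: use (w₃, w₄, w₁, w₂) with coefficients (t, s)
      refine main_lem c h34 h12 dAB
        (fun j h => ⟨dDC j h, (hcl j h).1, (hcl j h).2⟩) x y t s fun j => ?_
      have := hid j; linarith
    · -- w₃ clean: use (w₄, w₃, w₁, w₂) with coefficients (-t, s)
      refine main_lem c (c.symm h34) h12 dAB
        (fun j h => ⟨dCD j h, (hcl j h).1, (hcl j h).2⟩) x y (-t) s fun j => ?_
      have := hid j; linarith
  -- wrap up: cancellation
  intro a b d
  refine AddCon.induction_on a fun a' => AddCon.induction_on b fun b' =>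
    AddCon.induction_on d fun d' => fun h => ?_
  rw [← AddCon.coe_add, ← AddCon.coe_add] at h
  have hcc : c (a' + b') (a' + d') := c.eq.mp h
  obtain ⟨s, t, hst⟩ := hLcon _ _ hcc
  refine c.eq.mpr (key b' d' ⟨s, t, fun j => ?_⟩)
  have := hst j
  simp only [Finsupp.add_apply] at this
  push_cast at this ⊢
  linarith
end
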